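/- arXiv:2303.01790 — 4 statements merged into one kernel-verified Lean document; each statement's English description precedes it below -/
import Mathlib

section
/- Let k ≥ 1, let m_1, …, m_k be positive integers with M = m_1 + ⋯ + m_k, set n = M − (k−1), let l_1, …, l_n be positive integers with L = l_1 + ⋯ + l_n, and let 0̂ ∈ P(L) denote the interval partition of {1,…,L} into n consecutive blocks of sizes l_1, …, l_n. Then the number of k-tuples (W_1,…,W_k) of subsets of {1,…,L} with |W_i| = m_i for every i and τ(W_1) ∨ ⋯ ∨ τ(W_k) ∨ 0̂ = 1_L (joins in the partition lattice) equals (∏_{j=1}^n l_j) · ((M−k)! / ∏_{i=1}^k (m_i−1)!) · (Σ_{j=1}^n l_j)^{k−1}. -/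
open Finset Filter

/-- The partition of `α` whose blocks are `W` together with the singletons outside `W`,
encoded as a setoid. -/
def tauSetoid {α : Type*} (W : Finset α) : Setoid α where
  r a b := a = b ∨ (a ∈ W ∧ b ∈ W)
  iseqv := by
    constructor
    · exact fun a => Or.inl rfl
    · rintro a b (rfl | ⟨h1, h2⟩)
      · exact Or.inl rfl
      · exact Or.inr ⟨h2, h1⟩
    · rintro a b c (rfl | ⟨h1, h2⟩) h
      · exact h
      · rcases h with rfl | ⟨h3, h4⟩
        · exact Or.inr ⟨h1, h2⟩
        · exact Or.inr ⟨h1, h4⟩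

/-- The interval partition of `Fin M` into `k` consecutive blocks of sizes `m 0, …, m (k-1)`,
encoded as a setoid: two points are equivalent iff the same number of partial sums
`m 0 + ⋯ + m (i-1)` are below them. -/
def intervalSetoid (k M : ℕ) (m : Fin k → ℕ) : Setoid (Fin M) :=
  Setoid.ker (fun x : Fin M =>
    (Finset.univ.filter (fun i : Fin k =>
      (∑ j ∈ Finset.univ.filter (fun j => j < i), m j) ≤ (x : ℕ))).card)


set_option linter.unusedSectionVars false
set_option maxHeartbeats 1000000

section Basic
variable {α β : Type*}

lemma tau_rel {W : Finset α} {a b : α} : tauSetoid W a b ↔ a = b ∨ (a ∈ W ∧ b ∈ W) := Iff.rfl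

lemma tau_empty : tauSetoid (∅ : Finset α) = ⊥ := by
  ext a b; simp [tau_rel]

lemma iSup_fin_succ {k : ℕ} (f : Fin (k + 1) → Setoid α) :
    (⨆ i, f i) = f 0 ⊔ ⨆ i : Fin k, f i.succ := by
  apply le_antisymm
  · exact iSup_le (fun i => Fin.cases le_sup_left (fun j => le_sup_of_le_right (le_iSup (fun i : Fin k => f i.succ) j)) i)
  · exact sup_le (le_iSup f 0) (iSup_le fun j => le_iSup f j.succ)

lemma iSup_fin_one (f : Fin 1 → Setoid α) : (⨆ i, f i) = f 0 := by
  apply le_antisymm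
  · exact iSup_le (fun i => by fin_cases i; exact le_rfl)
  · exact le_iSup f 0

lemma ker_sup_tau [DecidableEq β] (b : α → β) (W : Finset α) (t₀ : β) (ht₀ : t₀ ∈ W.image b) :
    Setoid.ker b ⊔ tauSetoid W = Setoid.ker (fun x => if b x ∈ W.image b then t₀ else b x) := by
  apply le_antisymm
  · apply sup_le
    · intro x y hxy
      rw [Setoid.ker_def] at hxy ⊢
      simp [hxy]
    · intro x y hxy
      rcases tau_rel.1 hxy with rfl | ⟨hx, hy⟩
      · exact (Setoid.ker _).refl x
      · rw [Setoid.ker_def]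
        simp [Finset.mem_image_of_mem b hx, Finset.mem_image_of_mem b hy]
  · intro x y hxy
    rw [Setoid.ker_def] at hxy
    by_cases hx : b x ∈ W.image b <;> by_cases hy : b y ∈ W.image b
    · obtain ⟨wx, hwx, hbx⟩ := Finset.mem_image.1 hx
      obtain ⟨wy, hwy, hby⟩ := Finset.mem_image.1 hy
      have h1 : (Setoid.ker b ⊔ tauSetoid W) x wx :=
        le_sup_left (α := Setoid α) (Setoid.ker_def.2 hbx.symm)
      have h2 : (Setoid.ker b ⊔ tauSetoid W) wx wy :=
        le_sup_right (α := Setoid α) (tau_rel.2 (Or.inr ⟨hwx, hwy⟩))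
      have h3 : (Setoid.ker b ⊔ tauSetoid W) wy y :=
        le_sup_left (α := Setoid α) (Setoid.ker_def.2 hby)
      exact (Setoid.ker b ⊔ tauSetoid W).trans h1 ((Setoid.ker b ⊔ tauSetoid W).trans h2 h3)
    · simp only [if_pos hx, if_neg hy] at hxy
      exact absurd (hxy ▸ ht₀) hy
    · simp only [if_neg hx, if_pos hy] at hxy
      exact absurd (hxy.symm ▸ ht₀) hx
    · simp only [if_neg hx, if_neg hy] at hxy
      exact le_sup_left (α := Setoid α) (Setoid.ker_def.2 hxy)

/-- the collapsed index type -/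
@[reducible] def CollT [DecidableEq β] (T : Finset β) (t₀ : β) : Type _ :=
  {j : β // j ∉ T.erase t₀}

/-- the collapsed map -/
def collMap [DecidableEq β] (b : α → β) (W : Finset α) (t₀ : β) : α → CollT (W.image b) t₀ :=
  fun x => if h : b x ∈ W.image b then ⟨t₀, Finset.notMem_erase _ _⟩
    else ⟨b x, fun hc => h (Finset.mem_of_mem_erase hc)⟩

lemma ker_collMap [DecidableEq β] (b : α → β) (W : Finset α) (t₀ : β) (ht₀ : t₀ ∈ W.image b) :
    Setoid.ker b ⊔ tauSetoid W = Setoid.ker (collMap b W t₀) := by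
  rw [ker_sup_tau b W t₀ ht₀]
  ext x y
  rw [Setoid.ker_def, Setoid.ker_def, Subtype.ext_iff]
  unfold collMap
  by_cases hx : b x ∈ W.image b <;> by_cases hy : b y ∈ W.image b <;> simp [hx, hy]

lemma collMap_surj [DecidableEq β] (b : α → β) (hb : Function.Surjective b) (W : Finset α)
    (t₀ : β) (ht₀ : t₀ ∈ W.image b) : Function.Surjective (collMap b W t₀) := by
  rintro ⟨j, hj⟩
  by_cases hjT : j ∈ W.image b
  · obtain ⟨w, hw, hbw⟩ := Finset.mem_image.1 ht₀
    refine ⟨w, ?_⟩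
    unfold collMap
    rw [dif_pos (hbw ▸ Finset.mem_image_of_mem b hw)]
    have : j = t₀ := by
      by_contra hne
      exact hj (Finset.mem_erase.2 ⟨hne, hjT⟩)
    exact Subtype.ext this.symm
  · obtain ⟨x, hx⟩ := hb j
    refine ⟨x, ?_⟩
    unfold collMap
    rw [dif_neg (hx ▸ hjT)]
    exact Subtype.ext hx

lemma card_CollT [DecidableEq β] [Fintype β] (T : Finset β) (t₀ : β) (ht₀ : t₀ ∈ T) :
    Fintype.card (CollT T t₀) + (T.card - 1) = Fintype.card β := by
  have h1 : Fintype.card (CollT T t₀) = Fintype.card β - (T.card - 1) := by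
    rw [Fintype.card_subtype]
    have : Finset.univ.filter (fun j => j ∉ T.erase t₀) = Finset.univ \ T.erase t₀ := by
      ext j; simp
    rw [this, Finset.card_sdiff_of_subset (Finset.subset_univ _), Finset.card_erase_of_mem ht₀,
      Finset.card_univ]
  have h2 : T.card - 1 ≤ Fintype.card β := by
    calc T.card - 1 ≤ T.card := Nat.sub_le _ _
    _ ≤ Fintype.card β := by simpa using Finset.card_le_card (Finset.subset_univ T)
  omega

end Basic

section Count
variable {α β : Type*} [Fintype α] [DecidableEq α] [DecidableEq β]


lemma fiber_card_one (b : α → β) {T : Finset β} {W : Finset α}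
    (hc : W.card = T.card) (him : W.image b = T) :
    ∀ t ∈ T, (W.filter (fun x => b x = t)).card = 1 := by
  have hmaps : ∀ x ∈ W, b x ∈ T := fun x hx => him ▸ Finset.mem_image_of_mem b hx
  have hsum : ∑ t ∈ T, (W.filter (fun x => b x = t)).card = W.card :=
    (Finset.card_eq_sum_card_fiberwise hmaps).symm
  have hpos : ∀ t ∈ T, 1 ≤ (W.filter (fun x => b x = t)).card := by
    intro t ht
    rw [Nat.one_le_iff_ne_zero, ← Nat.pos_iff_ne_zero, Finset.card_pos]
    obtain ⟨x, hx, hbx⟩ := Finset.mem_image.1 (him ▸ ht)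
    exact ⟨x, Finset.mem_filter.2 ⟨hx, hbx⟩⟩
  intro t ht
  by_contra hne
  have h2 : 2 ≤ (W.filter (fun x => b x = t)).card := by
    have := hpos t ht; omega
  have : T.card + 1 ≤ ∑ t ∈ T, (W.filter (fun x => b x = t)).card := by
    calc T.card + 1 = (∑ _t ∈ T.erase t, 1) + 2 := by
          rw [Finset.sum_const, smul_eq_mul, mul_one, Finset.card_erase_of_mem ht]
          have : 0 < T.card := Finset.card_pos.2 ⟨t, ht⟩
          omega
      _ ≤ (∑ t' ∈ T.erase t, (W.filter (fun x => b x = t')).card)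
            + (W.filter (fun x => b x = t)).card := by
          gcongr with t' ht'
          exact hpos t' (Finset.mem_of_mem_erase ht')
      _ = ∑ t ∈ T, (W.filter (fun x => b x = t)).card := by
          rw [Finset.sum_erase_add _ _ ht]
  omega

lemma transversal_mem (b : α → β) (T : Finset β) (g : (a : β) → a ∈ T → α)
    (hg : ∀ a ha, b (g a ha) = a) :
    (T.attach.image (fun t => g t.1 t.2)).card = T.card ∧
      (T.attach.image (fun t => g t.1 t.2)).image b = T := by
  have hinj : Set.InjOn (fun t : {t // t ∈ T} => g t.1 t.2) T.attach := by
    intro t1 _ t2 _ heq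
    exact Subtype.ext (by rw [← hg t1.1 t1.2, ← hg t2.1 t2.2]; exact congrArg b heq)
  constructor
  · rw [Finset.card_image_of_injOn hinj, Finset.card_attach]
  · ext s
    simp only [Finset.image_image, Finset.mem_image, Finset.mem_attach, true_and,
      Subtype.exists, Function.comp_apply]
    constructor
    · rintro ⟨u, hu, rfl⟩
      rw [hg u hu]; exact hu
    · intro hs
      exact ⟨s, hs, hg s hs⟩

lemma card_transversal (b : α → β) (T : Finset β) :
    (univ.filter (fun W : Finset α => W.card = T.card ∧ W.image b = T)).card
      = ∏ t ∈ T, (univ.filter fun x => b x = t).card := by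
  rw [← Finset.card_pi]
  symm
  apply Finset.card_bij (fun g _ => T.attach.image (fun t => g t.1 t.2))
  · intro g hg
    rw [Finset.mem_pi] at hg
    have := transversal_mem b T g (fun a ha => (Finset.mem_filter.1 (hg a ha)).2)
    exact Finset.mem_filter.2 ⟨Finset.mem_univ _, this⟩
  · -- inj
    intro g1 hg1 g2 hg2 heq
    rw [Finset.mem_pi] at hg1 hg2
    have hb1 : ∀ a ha, b (g1 a ha) = a := fun a ha => (Finset.mem_filter.1 (hg1 a ha)).2
    have hb2 : ∀ a ha, b (g2 a ha) = a := fun a ha => (Finset.mem_filter.1 (hg2 a ha)).2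
    obtain ⟨hcard, him⟩ := transversal_mem b T g1 hb1
    funext t ht
    have hone := fiber_card_one b hcard him t ht
    have m1 : g1 t ht ∈ (T.attach.image (fun s => g1 s.1 s.2)).filter (fun x => b x = t) :=
      Finset.mem_filter.2 ⟨Finset.mem_image.2 ⟨⟨t, ht⟩, Finset.mem_attach _ _, rfl⟩, hb1 t ht⟩
    have m2 : g2 t ht ∈ (T.attach.image (fun s => g1 s.1 s.2)).filter (fun x => b x = t) := by
      refine Finset.mem_filter.2 ⟨?_, hb2 t ht⟩
      rw [heq]
      exact Finset.mem_image.2 ⟨⟨t, ht⟩, Finset.mem_attach _ _, rfl⟩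
    obtain ⟨z, hz⟩ := Finset.card_eq_one.1 hone
    rw [hz, Finset.mem_singleton] at m1 m2
    rw [m1, m2]
  · -- surj
    intro W hW
    obtain ⟨-, hc, him⟩ := Finset.mem_filter.1 hW
    have hone := fiber_card_one b hc him
    have hne : ∀ t ∈ T, (W.filter (fun x => b x = t)).Nonempty := by
      intro t ht; rw [← Finset.card_pos, hone t ht]; exact Nat.one_pos
    have hmem : ∀ t ht, (hne t ht).choose ∈ W ∧ b (hne t ht).choose = t :=
      fun t ht => Finset.mem_filter.1 (hne t ht).choose_spec
    refine ⟨fun t ht => (hne t ht).choose, Finset.mem_pi.2 fun t ht =>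
      Finset.mem_filter.2 ⟨Finset.mem_univ _, (hmem t ht).2⟩, ?_⟩
    obtain ⟨hcard, -⟩ := transversal_mem b T (fun t ht => (hne t ht).choose)
      (fun t ht => (hmem t ht).2)
    apply Finset.eq_of_subset_of_card_le
    · intro x hx
      obtain ⟨t, -, rfl⟩ := Finset.mem_image.1 hx
      exact (hmem t.1 t.2).1
    · rw [hc, hcard]

/-- key binomial-sum identity -/
lemma sum_powersetCard_sum [Fintype β] (lam : β → ℕ) (m : ℕ) (hm : 1 ≤ m) :
    ∑ T ∈ Finset.powersetCard m (univ : Finset β), ∑ t ∈ T, lam t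
      = (Fintype.card β - 1).choose (m - 1) * ∑ j, lam j := by
  have hcount : ∀ t : β, ((Finset.powersetCard m (univ : Finset β)).filter
      (fun T => t ∈ T)).card = (Fintype.card β - 1).choose (m - 1) := by
    intro t
    have h1 : ((Finset.powersetCard m (univ : Finset β)).filter (fun T => t ∈ T)).card
        = (Finset.powersetCard (m-1) (univ.erase t)).card := by
      apply Finset.card_bij (fun T _ => T.erase t)
      · intro T hT
        obtain ⟨hT1, ht⟩ := Finset.mem_filter.1 hT
        rw [Finset.mem_powersetCard] at hT1 ⊢
        constructor
        · intro x hx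
          rw [Finset.mem_erase] at hx ⊢
          exact ⟨hx.1, Finset.mem_univ _⟩
        · rw [Finset.card_erase_of_mem ht, hT1.2]
      · intro T1 hT1 T2 hT2 heq
        obtain ⟨-, ht1⟩ := Finset.mem_filter.1 hT1
        obtain ⟨-, ht2⟩ := Finset.mem_filter.1 hT2
        have : insert t (T1.erase t) = insert t (T2.erase t) := by rw [heq]
        rwa [Finset.insert_erase ht1, Finset.insert_erase ht2] at this
      · intro S hS
        rw [Finset.mem_powersetCard] at hS
        have htS : t ∉ S := fun h => (Finset.mem_erase.1 (hS.1 h)).1 rfl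
        refine ⟨insert t S, Finset.mem_filter.2 ⟨Finset.mem_powersetCard.2
          ⟨Finset.subset_univ _, ?_⟩, Finset.mem_insert_self _ _⟩, ?_⟩
        · rw [Finset.card_insert_of_notMem htS, hS.2]
          omega
        · rw [Finset.erase_insert htS]
    rw [h1, Finset.card_powersetCard, Finset.card_erase_of_mem (Finset.mem_univ t),
      Finset.card_univ]
  calc ∑ T ∈ Finset.powersetCard m (univ : Finset β), ∑ t ∈ T, lam t
      = ∑ T ∈ Finset.powersetCard m (univ : Finset β), ∑ t : β, if t ∈ T then lam t else 0 := by
        apply Finset.sum_congr rfl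
        intro T _
        rw [Finset.sum_ite_mem, Finset.univ_inter]
    _ = ∑ t : β, ∑ T ∈ Finset.powersetCard m (univ : Finset β), if t ∈ T then lam t else 0 :=
        Finset.sum_comm
    _ = ∑ t : β, ((Finset.powersetCard m (univ : Finset β)).filter (fun T => t ∈ T)).card * lam t := by
        apply Finset.sum_congr rfl
        intro t _
        rw [Finset.sum_ite, Finset.sum_const_zero, add_zero, Finset.sum_const, smul_eq_mul]
    _ = (Fintype.card β - 1).choose (m - 1) * ∑ j, lam j := by
        rw [Finset.mul_sum]
        exact Finset.sum_congr rfl (fun t _ => by rw [hcount t])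

end Count

section Fib
variable {α β : Type*} [Fintype α] [DecidableEq β] [Fintype β]


lemma prod_fibers_collMap (b : α → β) (W : Finset α) (t₀ : β) (ht₀ : t₀ ∈ W.image b) :
    ∏ j' : CollT (W.image b) t₀, (univ.filter fun x => collMap b W t₀ x = j').card
      = (∑ t ∈ W.image b, (univ.filter fun x => b x = t).card) *
        ∏ j ∈ (univ : Finset β) \ W.image b, (univ.filter fun x => b x = j).card := by
  classical
  set T := W.image b with hT
  set f : β → ℕ := fun j => (univ.filter fun x => (collMap b W t₀ x).1 = j).card with hf
  have step1 : ∏ j' : CollT T t₀, (univ.filter fun x => collMap b W t₀ x = j').card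
      = ∏ j' : CollT T t₀, f j'.1 := by
    apply Finset.prod_congr rfl
    intro j' _
    congr 1
    apply Finset.filter_congr
    intro x _
    rw [Subtype.ext_iff]
  have step2 : ∏ j' : CollT T t₀, f j'.1
      = ∏ j ∈ univ.filter (fun j => j ∉ T.erase t₀), f j := by
    symm
    apply Finset.prod_subtype
    intro x
    simp
  have hset : univ.filter (fun j => j ∉ T.erase t₀) = insert t₀ ((univ : Finset β) \ T) := by
    ext j
    simp only [Finset.mem_filter, Finset.mem_univ, true_and, Finset.mem_erase,
      Finset.mem_insert, Finset.mem_sdiff, not_and]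
    tauto
  have ht₀' : t₀ ∉ (univ : Finset β) \ T := by simp [Finset.mem_sdiff, ht₀]
  have ft₀ : f t₀ = ∑ t ∈ T, (univ.filter fun x => b x = t).card := by
    have h1 : univ.filter (fun x => (collMap b W t₀ x).1 = t₀) = univ.filter (fun x => b x ∈ T) := by
      apply Finset.filter_congr
      intro x _
      unfold collMap
      by_cases hx : b x ∈ T
      · simp only [hT] at hx ⊢
        rw [dif_pos hx]
        simp [hx]
      · simp only [hT] at hx ⊢
        rw [dif_neg hx]
        simp only [hx, iff_false]
        intro he
        exact hx (he ▸ ht₀)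
    rw [hf]
    simp only [h1]
    rw [Finset.card_eq_sum_card_fiberwise (f := b) (t := T) (s := univ.filter (fun x => b x ∈ T)) (fun x hx => (Finset.mem_filter.1 hx).2)]
    apply Finset.sum_congr rfl
    intro t ht
    congr 1
    rw [Finset.filter_filter]
    apply Finset.filter_congr
    intro x _
    constructor
    · rintro ⟨-, h⟩; exact h
    · intro h; exact ⟨h ▸ ht, h⟩
  have fj : ∀ j ∈ (univ : Finset β) \ T, f j = (univ.filter fun x => b x = j).card := by
    intro j hj
    rw [Finset.mem_sdiff] at hj
    have hjT : j ∉ T := hj.2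
    have heq : (univ.filter fun x => (collMap b W t₀ x).1 = j) = univ.filter (fun x => b x = j) := by
      apply Finset.filter_congr
      intro x _
      unfold collMap
      by_cases hx : b x ∈ T
      · simp only [hT] at hx ⊢
        rw [dif_pos hx]
        simp only []
        constructor
        · intro h; exact absurd (h ▸ ht₀) (h ▸ hjT)
        · intro h; exact absurd (h ▸ hx) hjT
      · simp only [hT] at hx ⊢
        rw [dif_neg hx]
    simp only [hf, heq]
  rw [step1, step2, hset, Finset.prod_insert ht₀', ft₀]
  congr 1
  exact Finset.prod_congr rfl fj
end Fib

section Impossible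
variable {α : Type*}

lemma card_le_join {β : Type*} [Fintype β] [DecidableEq β] (k : ℕ) (b : α → β)
    (hb : Function.Surjective b) (W : Fin k → Finset α)
    (h : (⨆ i, tauSetoid (W i)) ⊔ Setoid.ker b = ⊤) :
    Fintype.card β ≤ 1 + ∑ i, ((W i).card - 1) := by
  induction k generalizing β with
  | zero =>
    rw [iSup_of_empty, bot_sup_eq] at h
    have : Fintype.card β ≤ 1 := by
      by_contra hc
      push_neg at hc
      obtain ⟨j1, j2, hne⟩ := Fintype.exists_pair_of_one_lt_card hc
      obtain ⟨x1, rfl⟩ := hb j1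
      obtain ⟨x2, rfl⟩ := hb j2
      exact hne (Setoid.ker_def.1 (Setoid.eq_top_iff.1 h x1 x2))
    simpa using this
  | succ k ih =>
    rw [iSup_fin_succ] at h
    by_cases hW0 : W 0 = ∅
    · rw [hW0, tau_empty, bot_sup_eq] at h
      have := ih b hb (fun i => W i.succ) h
      have heq : ∑ i : Fin k, (((fun i => W i.succ) i).card - 1)
          = ∑ i : Fin k, ((W i.succ).card - 1) := rfl
      rw [heq] at this
      rw [Fin.sum_univ_succ]
      omega
    · have hne : (W 0).Nonempty := Finset.nonempty_iff_ne_empty.2 hW0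
      have hTne : ((W 0).image b).Nonempty := hne.image b
      obtain ⟨t₀, ht₀⟩ := hTne
      have hre : (tauSetoid (W 0) ⊔ ⨆ i : Fin k, tauSetoid (W i.succ)) ⊔ Setoid.ker b
          = (⨆ i : Fin k, tauSetoid (W i.succ)) ⊔ Setoid.ker (collMap b (W 0) t₀) := by
        rw [← ker_collMap b (W 0) t₀ ht₀, sup_comm (tauSetoid (W 0)), sup_assoc,
          sup_comm (tauSetoid (W 0)) (Setoid.ker b)]
      rw [hre] at h
      have := ih (collMap b (W 0) t₀) (collMap_surj b hb (W 0) t₀ ht₀)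
        (fun i => W i.succ) h
      have heq : ∑ i : Fin k, (((fun i => W i.succ) i).card - 1)
          = ∑ i : Fin k, ((W i.succ).card - 1) := rfl
      rw [heq] at this
      have hcard := card_CollT ((W 0).image b) t₀ ht₀
      have himle : ((W 0).image b).card ≤ (W 0).card := Finset.card_image_le
      have him1 : 1 ≤ ((W 0).image b).card := Finset.card_pos.2 ⟨t₀, ht₀⟩
      rw [Fin.sum_univ_succ]
      omega

end Impossible

lemma multinomial_univ_succ (k : ℕ) (f : Fin (k+1) → ℕ) :
    Nat.multinomial univ f
      = (∑ i, f i).choose (f 0) * Nat.multinomial univ (fun i : Fin k => f i.succ) := by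
  rw [Fin.univ_succ, Finset.cons_eq_insert, Nat.multinomial_insert (by simp) f]
  congr 1
  · congr 1
    rw [Finset.sum_insert (by simp), Finset.sum_map]
  · simp only [Nat.multinomial, Finset.sum_map, Finset.prod_map]
    rfl


section Interval
variable (n L : ℕ) (l : Fin n → ℕ)


/-- partial sums -/
def psum (c : ℕ) : ℕ := ∑ j ∈ univ.filter (fun j : Fin n => (j : ℕ) < c), l j

/-- the count function underlying `intervalSetoid` -/
def icount (x : Fin L) : ℕ :=
  (Finset.univ.filter (fun i : Fin n =>
      (∑ j ∈ Finset.univ.filter (fun j => j < i), l j) ≤ (x : ℕ))).card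

lemma icount_eq (x : Fin L) :
    icount n L l x = (univ.filter (fun i : Fin n => psum n l i.val ≤ (x : ℕ))).card := rfl

lemma intervalSetoid_eq_ker : intervalSetoid n L l = Setoid.ker (icount n L l) := rfl

variable {n L l}

lemma psum_mono {c c' : ℕ} (h : c ≤ c') : psum n l c ≤ psum n l c' := by
  apply Finset.sum_le_sum_of_subset
  intro j hj
  rw [Finset.mem_filter] at hj ⊢
  exact ⟨hj.1, lt_of_lt_of_le hj.2 h⟩

lemma psum_succ {c : ℕ} (hc : c < n) :
    psum n l (c + 1) = psum n l c + l ⟨c, hc⟩ := by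
  unfold psum
  have : univ.filter (fun j : Fin n => (j : ℕ) < c + 1)
      = insert ⟨c, hc⟩ (univ.filter (fun j : Fin n => (j : ℕ) < c)) := by
    ext j
    simp only [Finset.mem_filter, Finset.mem_univ, true_and, Finset.mem_insert]
    constructor
    · intro h
      rcases Nat.lt_succ_iff_lt_or_eq.1 h with h' | h'
      · exact Or.inr h'
      · exact Or.inl (Fin.ext h')
    · rintro (rfl | h)
      · exact Nat.lt_succ_self _
      · exact Nat.lt_succ_of_lt h
  rw [this, Finset.sum_insert (by simp)]
  ring

lemma psum_top (hL : L = ∑ j, l j) : psum n l n = L := by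
  unfold psum
  rw [hL]
  congr 1
  ext j
  simp [j.isLt]

lemma icount_pos (hn : 0 < n) (x : Fin L) : 1 ≤ icount n L l x := by
  rw [icount_eq]
  apply Finset.card_pos.2
  refine ⟨⟨0, hn⟩, Finset.mem_filter.2 ⟨Finset.mem_univ _, ?_⟩⟩
  show psum n l 0 ≤ (x : ℕ)
  unfold psum
  simp

lemma icount_le (x : Fin L) : icount n L l x ≤ n := by
  rw [icount_eq]
  calc _ ≤ (univ : Finset (Fin n)).card := Finset.card_filter_le _ _
    _ = n := by simp

/-- key: membership in the down-set -/
lemma psum_le_iff (x : Fin L) (i : Fin n) :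
    psum n l i.val ≤ (x : ℕ) ↔ i.val < icount n L l x := by
  set D := univ.filter (fun i : Fin n => psum n l i.val ≤ (x : ℕ)) with hD
  have hdc : ∀ i' i : Fin n, i' ≤ i → i ∈ D → i' ∈ D := by
    intro i' i hle hi
    rw [hD, Finset.mem_filter] at hi ⊢
    exact ⟨Finset.mem_univ _, le_trans (psum_mono hle) hi.2⟩
  have hmem : ∀ i : Fin n, i ∈ D ↔ i.val < D.card := by
    intro i
    constructor
    · intro hi
      have hsub : Finset.Iic i ⊆ D := fun i' hi' => hdc i' i (Finset.mem_Iic.1 hi') hi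
      have := Finset.card_le_card hsub
      rw [Fin.card_Iic] at this
      omega
    · intro hlt
      by_contra hi
      have hsub : D ⊆ Finset.Iio i := by
        intro d hd
        rw [Finset.mem_Iio]
        by_contra hnd
        exact hi (hdc i d (le_of_not_gt hnd) hd)
      have := Finset.card_le_card hsub
      rw [Fin.card_Iio] at this
      omega
  have := hmem i
  rw [hD, Finset.mem_filter] at this
  rw [icount_eq]
  constructor
  · intro h
    exact (this.1 ⟨Finset.mem_univ _, h⟩)
  · intro h
    exact (this.2 h).2

/-- fiber description -/
lemma icount_eq_iff (hL : L = ∑ j, l j) (x : Fin L) (c : ℕ) (hc : c < n) :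
    icount n L l x = c + 1 ↔ psum n l c ≤ (x : ℕ) ∧ (x : ℕ) < psum n l (c + 1) := by
  constructor
  · intro h
    constructor
    · have := (psum_le_iff x ⟨c, hc⟩).2 (by rw [h]; exact Nat.lt_succ_self _)
      exact this
    · by_cases hc1 : c + 1 < n
      · by_contra hle
        push_neg at hle
        have h3 : c + 1 < icount n L l x := (psum_le_iff x ⟨c+1, hc1⟩).1 hle
        omega
      · have hceq : c + 1 = n := by omega
        have : (x : ℕ) < L := x.isLt
        rw [hceq, psum_top hL]
        exact this
  · rintro ⟨h1, h2⟩
    have hge : c < icount n L l x := (psum_le_iff x ⟨c, hc⟩).1 h1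
    have hle' : icount n L l x ≤ c + 1 := by
      by_contra hgt
      push_neg at hgt
      have hc1 : c + 1 < n := by
        have := icount_le (n := n) (l := l) x
        omega
      have h3 : psum n l (c+1) ≤ (x : ℕ) :=
        (psum_le_iff x ⟨c+1, hc1⟩).2 (show c + 1 < icount n L l x by omega)
      omega
    omega

/-- the block-index map -/
def blockMap (l : Fin n → ℕ) (hn : 0 < n) : Fin L → Fin n :=
  fun x => ⟨icount n L l x - 1, by
    have h1 := icount_le (n := n) (l := l) x
    have h2 := icount_pos (n := n) (l := l) hn x
    omega⟩

lemma blockMap_eq_iff (hn : 0 < n) (x : Fin L) (j : Fin n) :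
    blockMap l hn x = j ↔ icount n L l x = j.val + 1 := by
  unfold blockMap
  rw [Fin.ext_iff]
  have h2 := icount_pos (n := n) (l := l) hn x
  simp only []
  omega

lemma ker_blockMap (hn : 0 < n) : intervalSetoid n L l = Setoid.ker (blockMap (L := L) l hn) := by
  rw [intervalSetoid_eq_ker]
  ext x y
  rw [Setoid.ker_def, Setoid.ker_def]
  unfold blockMap
  rw [Fin.ext_iff]
  have hx := icount_pos (n := n) (l := l) hn x
  have hy := icount_pos (n := n) (l := l) hn y
  simp only []
  omega

lemma fiber_blockMap (hL : L = ∑ j, l j) (hn : 0 < n) (j : Fin n) :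
    (univ.filter (fun x : Fin L => blockMap l hn x = j)).card = l j := by
  have hfib : univ.filter (fun x : Fin L => blockMap l hn x = j)
      = univ.filter (fun x : Fin L => psum n l j.val ≤ (x : ℕ) ∧
          (x : ℕ) < psum n l j.val + l j) := by
    apply Finset.filter_congr
    intro x _
    rw [blockMap_eq_iff hn x j, icount_eq_iff hL x j.val j.isLt, psum_succ j.isLt]
  rw [hfib]
  have hub : psum n l j.val + l j ≤ L := by
    rw [← psum_succ j.isLt, ← psum_top (n := n) (l := l) hL]
    exact psum_mono j.isLt
  have hcb : (univ.filter (fun x : Fin L => psum n l j.val ≤ (x : ℕ) ∧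
      (x : ℕ) < psum n l j.val + l j)).card
      = (Finset.Ico (psum n l j.val) (psum n l j.val + l j)).card := by
    apply Finset.card_bij (fun (x : Fin L) _ => (x : ℕ))
    · intro x hx
      rw [Finset.mem_filter] at hx
      rw [Finset.mem_Ico]
      exact hx.2
    · intro x _ y _ h
      exact Fin.ext h
    · intro a ha
      rw [Finset.mem_Ico] at ha
      exact ⟨⟨a, lt_of_lt_of_le ha.2 hub⟩, Finset.mem_filter.2 ⟨Finset.mem_univ _, ha⟩, rfl⟩
  rw [hcb, Nat.card_Ico]
  omega

lemma blockMap_surjective (hL : L = ∑ j, l j) (hn : 0 < n) (hl : ∀ j, 1 ≤ l j) :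
    Function.Surjective (blockMap (L := L) l hn) := by
  intro j
  have h := fiber_blockMap hL hn j
  have hpos : 0 < (univ.filter (fun x : Fin L => blockMap l hn x = j)).card := by
    rw [h]; exact hl j
  obtain ⟨x, hx⟩ := Finset.card_pos.1 hpos
  exact ⟨x, (Finset.mem_filter.1 hx).2⟩

end Interval

section Main
universe u v
variable {α : Type u} [Fintype α] [DecidableEq α] [Nonempty α]

lemma tau_sup_ker_eq_top_iff {β : Type v} [Fintype β] [DecidableEq β] (b : α → β)
    (hb : Function.Surjective b) (W : Finset α) (hW : W.Nonempty) :
    tauSetoid W ⊔ Setoid.ker b = ⊤ ↔ W.image b = univ := by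
  obtain ⟨t₀, ht₀⟩ := hW.image b
  have hcoll : tauSetoid W ⊔ Setoid.ker b = Setoid.ker (collMap b W t₀) := by
    rw [sup_comm]; exact ker_collMap b W t₀ ht₀
  rw [hcoll]
  constructor
  · intro h
    apply Finset.eq_univ_iff_forall.2
    intro j
    by_contra hj
    obtain ⟨x, rfl⟩ := hb j
    obtain ⟨w, hw⟩ := hW
    have hrel : collMap b W t₀ x = collMap b W t₀ w := Setoid.ker_def.1 (Setoid.eq_top_iff.1 h x w)
    have h1 : collMap b W t₀ x = ⟨b x, fun hc => hj (Finset.mem_of_mem_erase hc)⟩ := by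
      unfold collMap; rw [dif_neg hj]
    have h2 : (collMap b W t₀ w).1 = t₀ := by
      unfold collMap; rw [dif_pos (Finset.mem_image_of_mem b hw)]
    rw [h1] at hrel
    have : b x = t₀ := by rw [← h2, ← hrel]
    exact hj (this ▸ ht₀)
  · intro him
    apply Setoid.eq_top_iff.2
    intro x y
    apply Setoid.ker_def.2
    have hx : b x ∈ W.image b := him ▸ Finset.mem_univ (b x)
    have hy : b y ∈ W.image b := him ▸ Finset.mem_univ (b y)
    unfold collMap
    rw [dif_pos hx, dif_pos hy]

lemma main_count : ∀ (k : ℕ) {β : Type v} [Fintype β] [DecidableEq β] (b : α → β),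
    Function.Surjective b → ∀ (m : Fin (k+1) → ℕ), (∀ i, 1 ≤ m i) →
    (∑ i, (m i - 1) = Fintype.card β - 1) →
    Nat.card {W : Fin (k+1) → Finset α // (∀ i, (W i).card = m i) ∧
        (⨆ i, tauSetoid (W i)) ⊔ Setoid.ker b = ⊤}
      = (∏ j : β, (univ.filter fun x => b x = j).card) *
          Nat.multinomial Finset.univ (fun i => m i - 1) * (Fintype.card α) ^ k := by
  intro k
  induction k with
  | zero =>
    intro β _ _ b hb m hm hsum
    classical
    have hβpos : 0 < Fintype.card β := Fintype.card_pos_iff.2 ⟨b (Classical.arbitrary α)⟩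
    have hm0 : m 0 = Fintype.card β := by
      rw [Fin.sum_univ_one] at hsum
      have := hm 0
      omega
    have e : {W : Fin 1 → Finset α // (∀ i, (W i).card = m i) ∧
          (⨆ i, tauSetoid (W i)) ⊔ Setoid.ker b = ⊤}
        ≃ {W₀ : Finset α // W₀.card = m 0 ∧ W₀.image b = univ} := by
      apply Equiv.subtypeEquiv (Equiv.funUnique (Fin 1) (Finset α))
      intro W
      have hd : (Equiv.funUnique (Fin 1) (Finset α)) W = W 0 := rfl
      rw [hd]
      constructor
      · rintro ⟨hc, htop⟩
        have hne : (W 0).Nonempty := by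
          rw [← Finset.card_pos, hc 0]; exact hm 0
        rw [iSup_fin_one] at htop
        exact ⟨hc 0, (tau_sup_ker_eq_top_iff b hb (W 0) hne).1 htop⟩
      · rintro ⟨hc, him⟩
        have hne : (W 0).Nonempty := by
          rw [← Finset.card_pos, hc]; exact hm 0
        refine ⟨fun i => by fin_cases i; exact hc, ?_⟩
        rw [iSup_fin_one]
        exact (tau_sup_ker_eq_top_iff b hb (W 0) hne).2 him
    rw [Nat.card_congr e, Nat.card_eq_fintype_card, Fintype.card_subtype]
    have htr : (univ.filter (fun W₀ : Finset α => W₀.card = m 0 ∧ W₀.image b = univ)).card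
        = ∏ t ∈ (univ : Finset β), (univ.filter fun x => b x = t).card := by
      rw [← card_transversal b univ]
      congr 1
      apply Finset.filter_congr
      intro W₀ _
      rw [hm0, Finset.card_univ]
    have hmul : Nat.multinomial (univ : Finset (Fin 1)) (fun i => m i - 1) = 1 := by
      rw [multinomial_univ_succ 0 (fun i => m i - 1)]
      have h1 : Nat.multinomial (univ : Finset (Fin 0)) (fun i : Fin 0 => m i.succ - 1) = 1 := by
        rw [Finset.univ_eq_empty, Nat.multinomial_empty]
      rw [h1, Fin.sum_univ_one, Nat.choose_self, mul_one]
    rw [htr, hmul, pow_zero, mul_one, mul_one]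
  | succ k ih =>
    intro β _ _ b hb m hm hsum
    classical
    have hβpos : 0 < Fintype.card β := Fintype.card_pos_iff.2 ⟨b (Classical.arbitrary α)⟩
    set lam : β → ℕ := fun j => (univ.filter fun x => b x = j).card with hlam
    set Cm : ℕ := Nat.multinomial Finset.univ (fun i : Fin (k+1) => m i.succ - 1) with hCm
    set G : Finset β → ℕ := fun T =>
      ((∑ t ∈ T, lam t) * ∏ j ∈ (univ : Finset β) \ T, lam j) * Cm * (Fintype.card α) ^ k
      with hG
    set P : (Fin (k+2) → Finset α) → Prop := fun W => (∀ i, (W i).card = m i) ∧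
      (⨆ i, tauSetoid (W i)) ⊔ Setoid.ker b = ⊤ with hPdef
    have e : {W : Fin (k+2) → Finset α // P W}
        ≃ Σ W₀ : Finset α, {V : Fin (k+1) → Finset α // P (Fin.cons W₀ V)} :=
      { toFun := fun W => ⟨W.1 0, ⟨Fin.tail W.1, by
          rw [Fin.cons_self_tail]; exact W.2⟩⟩
        invFun := fun x => ⟨Fin.cons x.1 x.2.1, x.2.2⟩
        left_inv := fun W => Subtype.ext (Fin.cons_self_tail W.1)
        right_inv := fun x => rfl }
    rw [Nat.card_congr e, Nat.card_eq_fintype_card, Fintype.card_sigma]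
    -- pointwise key computation
    have hsup : ∀ (W₀ : Finset α) (V : Fin (k+1) → Finset α),
        (⨆ i, tauSetoid ((Fin.cons W₀ V : Fin (k+2) → Finset α) i))
          = tauSetoid W₀ ⊔ ⨆ i : Fin (k+1), tauSetoid (V i) := by
      intro W₀ V
      rw [iSup_fin_succ]
      simp only [Fin.cons_zero, Fin.cons_succ]
    have hcards : ∀ (W₀ : Finset α) (V : Fin (k+1) → Finset α),
        (∀ i, ((Fin.cons W₀ V : Fin (k+2) → Finset α) i).card = m i)
          ↔ (W₀.card = m 0 ∧ ∀ i : Fin (k+1), (V i).card = m i.succ) := by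
      intro W₀ V
      rw [Fin.forall_fin_succ]
      simp only [Fin.cons_zero, Fin.cons_succ]
    have key : ∀ W₀ : Finset α,
        Fintype.card {V : Fin (k+1) → Finset α // P (Fin.cons W₀ V)}
          = if W₀.card = m 0 ∧ (W₀.image b).card = m 0 then G (W₀.image b) else 0 := by
      intro W₀
      by_cases h1 : W₀.card = m 0
      · have hW₀ne : W₀.Nonempty := by
          rw [← Finset.card_pos, h1]; exact hm 0
        obtain ⟨t₀, ht₀⟩ := hW₀ne.image b
        have hsurj' := collMap_surj b hb W₀ t₀ ht₀
        have hker : tauSetoid W₀ ⊔ Setoid.ker b = Setoid.ker (collMap b W₀ t₀) := by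
          rw [sup_comm]; exact ker_collMap b W₀ t₀ ht₀
        have hcond : ∀ V : Fin (k+1) → Finset α,
            ((tauSetoid W₀ ⊔ ⨆ i : Fin (k+1), tauSetoid (V i)) ⊔ Setoid.ker b)
              = (⨆ i : Fin (k+1), tauSetoid (V i)) ⊔ Setoid.ker (collMap b W₀ t₀) := by
          intro V
          rw [sup_comm (tauSetoid W₀) (⨆ i : Fin (k+1), tauSetoid (V i)), sup_assoc, hker]
        have hβ'pos : 0 < Fintype.card (CollT (W₀.image b) t₀) :=
          Fintype.card_pos_iff.2 ⟨collMap b W₀ t₀ (Classical.arbitrary α)⟩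
        have hcardT := card_CollT (W₀.image b) t₀ ht₀
        have hT1 : 1 ≤ (W₀.image b).card := Finset.card_pos.2 ⟨t₀, ht₀⟩
        have hTle : (W₀.image b).card ≤ m 0 := h1 ▸ Finset.card_image_le
        by_cases h2 : (W₀.image b).card = m 0
        · rw [if_pos ⟨h1, h2⟩]
          have hsum' : ∑ i : Fin (k+1), (m i.succ - 1)
              = Fintype.card (CollT (W₀.image b) t₀) - 1 := by
            rw [Fin.sum_univ_succ] at hsum
            have := hm 0
            omega
          have hIH := ih (collMap b W₀ t₀) hsurj' (fun i => m i.succ)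
            (fun i => hm i.succ) hsum'
          have e2 : {V : Fin (k+1) → Finset α // P (Fin.cons W₀ V)}
              ≃ {V : Fin (k+1) → Finset α // (∀ i, (V i).card = m i.succ) ∧
                  (⨆ i, tauSetoid (V i)) ⊔ Setoid.ker (collMap b W₀ t₀) = ⊤} := by
            apply Equiv.subtypeEquiv (Equiv.refl _)
            intro V
            rw [Equiv.refl_apply, hPdef]
            simp only []
            rw [hsup W₀ V, hcond V]
            constructor
            · rintro ⟨hc, ht⟩
              exact ⟨((hcards W₀ V).1 hc).2, ht⟩
            · rintro ⟨hc, ht⟩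
              exact ⟨(hcards W₀ V).2 ⟨h1, hc⟩, ht⟩
          rw [← Nat.card_eq_fintype_card, Nat.card_congr e2, hIH,
            prod_fibers_collMap b W₀ t₀ ht₀, hG]
        · rw [if_neg (fun h => h2 h.2)]
          rw [Fintype.card_eq_zero_iff]
          refine ⟨fun V => ?_⟩
          obtain ⟨hc, ht⟩ := V.2
          rw [hsup W₀ V.1, hcond V.1] at ht
          have hle := card_le_join (k+1) (collMap b W₀ t₀) hsurj' V.1 ht
          have hvc : ∀ i : Fin (k+1), (V.1 i).card = m i.succ := ((hcards W₀ V.1).1 hc).2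
          have hSeq : ∑ i : Fin (k+1), ((V.1 i).card - 1) = ∑ i : Fin (k+1), (m i.succ - 1) :=
            Finset.sum_congr rfl (fun i _ => by rw [hvc i])
          rw [hSeq] at hle
          rw [Fin.sum_univ_succ] at hsum
          have := hm 0
          omega
      · rw [if_neg (fun h => h1 h.1)]
        rw [Fintype.card_eq_zero_iff]
        exact ⟨fun V => h1 (((hcards W₀ V.1).1 V.2.1).1)⟩
    calc ∑ W₀ : Finset α, Fintype.card {V : Fin (k+1) → Finset α // P (Fin.cons W₀ V)}
        = ∑ W₀ : Finset α, if W₀.card = m 0 ∧ (W₀.image b).card = m 0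
            then G (W₀.image b) else 0 := Finset.sum_congr rfl (fun W₀ _ => key W₀)
      _ = ∑ W₀ ∈ univ.filter (fun W₀ : Finset α =>
            W₀.card = m 0 ∧ (W₀.image b).card = m 0), G (W₀.image b) :=
          (Finset.sum_filter _ _).symm
      _ = ∑ T ∈ Finset.powersetCard (m 0) (univ : Finset β),
            ∑ W₀ ∈ (univ.filter (fun W₀ : Finset α =>
              W₀.card = m 0 ∧ (W₀.image b).card = m 0)).filter
                (fun W₀ => W₀.image b = T), G (W₀.image b) := by
          rw [Finset.sum_fiberwise_of_maps_to]
          intro W₀ hW₀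
          rw [Finset.mem_filter] at hW₀
          exact Finset.mem_powersetCard.2 ⟨Finset.subset_univ _, hW₀.2.2⟩
      _ = ∑ T ∈ Finset.powersetCard (m 0) (univ : Finset β), (∏ t ∈ T, lam t) * G T := by
          apply Finset.sum_congr rfl
          intro T hT
          have hTcard : T.card = m 0 := (Finset.mem_powersetCard.1 hT).2
          have hfe : (univ.filter (fun W₀ : Finset α =>
              W₀.card = m 0 ∧ (W₀.image b).card = m 0)).filter (fun W₀ => W₀.image b = T)
              = univ.filter (fun W₀ : Finset α => W₀.card = T.card ∧ W₀.image b = T) := by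
            ext W₀
            simp only [Finset.mem_filter, Finset.mem_univ, true_and]
            constructor
            · rintro ⟨⟨hc, -⟩, him⟩
              exact ⟨hTcard ▸ hc, him⟩
            · rintro ⟨hc, him⟩
              exact ⟨⟨hTcard ▸ hc, by rw [him, hTcard]⟩, him⟩
          rw [Finset.sum_congr rfl (fun W₀ hW₀ => by
            rw [(Finset.mem_filter.1 hW₀).2]), Finset.sum_const, smul_eq_mul, hfe,
            card_transversal b T]
      _ = (∏ j : β, lam j) * Nat.multinomial Finset.univ (fun i : Fin (k+2) => m i - 1) *
            (Fintype.card α) ^ (k+1) := by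
          have hprodsplit : ∀ T ∈ Finset.powersetCard (m 0) (univ : Finset β),
              (∏ t ∈ T, lam t) * G T
                = ((∏ j : β, lam j) * Cm * (Fintype.card α) ^ k) * ∑ t ∈ T, lam t := by
            intro T _
            rw [hG]
            have : (∏ t ∈ T, lam t) * ∏ j ∈ (univ : Finset β) \ T, lam j = ∏ j : β, lam j := by
              rw [← Finset.compl_eq_univ_sdiff]
              exact Finset.prod_mul_prod_compl T lam
            calc (∏ t ∈ T, lam t) * (((∑ t ∈ T, lam t) * ∏ j ∈ (univ : Finset β) \ T, lam j)
                  * Cm * (Fintype.card α) ^ k)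
                = ((∏ t ∈ T, lam t) * ∏ j ∈ (univ : Finset β) \ T, lam j)
                    * Cm * (Fintype.card α) ^ k * ∑ t ∈ T, lam t := by ring
              _ = ((∏ j : β, lam j) * Cm * (Fintype.card α) ^ k) * ∑ t ∈ T, lam t := by
                  rw [this]
          rw [Finset.sum_congr rfl hprodsplit, ← Finset.mul_sum,
            sum_powersetCard_sum lam (m 0) (hm 0)]
          have hlamsum : ∑ j : β, lam j = Fintype.card α := by
            rw [hlam, ← Finset.card_univ (α := α)]
            exact (Finset.card_eq_sum_card_fiberwise (fun x _ => Finset.mem_univ (b x))).symm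
          have hmulti : Nat.multinomial Finset.univ (fun i : Fin (k+2) => m i - 1)
              = (Fintype.card β - 1).choose (m 0 - 1) * Cm := by
            rw [multinomial_univ_succ (k+1) (fun i => m i - 1), hsum, hCm]
          rw [hlamsum, hmulti]
          ring
end Main

theorem statement4 (k : ℕ) (hk : 1 ≤ k) (m : Fin k → ℕ) (hm : ∀ i, 1 ≤ m i)
    (M : ℕ) (hM : M = ∑ i, m i) (n : ℕ) (hn : n = M - (k - 1))
    (l : Fin n → ℕ) (hl : ∀ j, 1 ≤ l j) (L : ℕ) (hL : L = ∑ j, l j) :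
    Nat.card {W : Fin k → Finset (Fin L) //
        (∀ i, (W i).card = m i) ∧
        (⨆ i, tauSetoid (W i)) ⊔ intervalSetoid n L l = ⊤} =
      (∏ j, l j) * Nat.multinomial Finset.univ (fun i => m i - 1) * (∑ j, l j) ^ (k - 1) := by
  classical
  obtain ⟨k', rfl⟩ : ∃ k', k = k' + 1 := ⟨k - 1, by omega⟩
  have hM_ge : k' + 1 ≤ M := by
    rw [hM]
    calc k' + 1 = ∑ _i : Fin (k'+1), 1 := by simp
      _ ≤ ∑ i, m i := Finset.sum_le_sum (fun i _ => hm i)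
  have hn_pos : 0 < n := by omega
  have hL_pos : 0 < L := by
    rw [hL]
    calc 0 < n := hn_pos
      _ = ∑ _j : Fin n, 1 := by simp
      _ ≤ ∑ j, l j := Finset.sum_le_sum (fun j _ => hl j)
  have hne : Nonempty (Fin L) := ⟨⟨0, hL_pos⟩⟩
  have hker := ker_blockMap (n := n) (L := L) (l := l) hn_pos
  rw [hker]
  have hsum' : ∑ i : Fin (k'+1), (m i - 1) = Fintype.card (Fin n) - 1 := by
    rw [Fintype.card_fin]
    have h1 : (∑ i, (m i - 1)) + (k'+1) = ∑ i, m i := by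
      calc (∑ i, (m i - 1)) + (k'+1) = ∑ i : Fin (k'+1), ((m i - 1) + 1) := by
            rw [Finset.sum_add_distrib]
            simp
        _ = ∑ i, m i := Finset.sum_congr rfl (fun i _ => Nat.sub_add_cancel (hm i))
    omega
  have hmain := main_count k' (blockMap (L := L) l hn_pos)
    (blockMap_surjective hL hn_pos hl) m hm hsum'
  rw [hmain]
  have hprod : ∏ j : Fin n, (Finset.univ.filter fun x => blockMap (L := L) l hn_pos x = j).card
      = ∏ j, l j :=
    Finset.prod_congr rfl (fun j _ => fiber_blockMap hL hn_pos j)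
  rw [hprod, Fintype.card_fin, hL, Nat.add_sub_cancel]
end

section
/- Let k ≥ 1, let m_1, …, m_k be positive integers with M = m_1 + ⋯ + m_k, and set n = M − (k−1). Then the number of k-tuples (W_1,…,W_k) of subsets of {1,…,n} with |W_i| = m_i for every i, W_1 ∪ ⋯ ∪ W_k = {1,…,n}, and τ(W_1) ∨ ⋯ ∨ τ(W_k) = 1_n (join in the partition lattice) equals ((M−k)! / ∏_{i=1}^k (m_i−1)!) · (M−(k−1))^{k−1}. -/
open Finset Filter

lemma tauSetoid_apply {α : Type*} (W : Finset α) (a b : α) :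
    tauSetoid W a b ↔ (a = b ∨ (a ∈ W ∧ b ∈ W)) := Iff.rfl

section Helpers

/-- Cardinality of a sigma type over a fintype. -/
lemma nat_card_sigma' {A : Type*} [Fintype A] (G : A → Type*) [∀ a, Fintype (G a)] :
    Nat.card (Σ a, G a) = ∑ a, Nat.card (G a) := by
  simp [Nat.card_eq_fintype_card]

end Helpers

section Acyclic

variable {n : ℕ}

/-- Acyclicity of a pointer function `p` with respect to a family of blocks `C`. -/
def Acyc {k : ℕ} (C : Fin k → Finset (Fin n)) (p : Fin k → Fin n) : Prop :=
  ∃ f : Fin k → ℕ, ∀ i j, p i ∈ C j → f j < f i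

lemma acyc_not_self_mem {k : ℕ} {C : Fin k → Finset (Fin n)} {p : Fin k → Fin n}
    (h : Acyc C p) (i : Fin k) : p i ∉ C i := by
  obtain ⟨f, hf⟩ := h
  intro hmem
  exact lt_irrefl _ (hf i i hmem)

lemma acyc_cons_root {k : ℕ} (C : Fin (k + 1) → Finset (Fin n)) (R : Finset (Fin n))
    (hdisjR : ∀ i, Disjoint R (C i)) (v : Fin n) (hv : v ∈ R) (q : Fin k → Fin n) :
    Acyc C (Fin.cons v q) ↔ Acyc (fun j => C j.succ) q := by
  constructor
  · rintro ⟨f, hf⟩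
    exact ⟨fun j => f j.succ, fun i j h => hf i.succ j.succ (by simpa using h)⟩
  · rintro ⟨f, hf⟩
    refine ⟨Fin.cons 0 (fun i => f i + 1), fun i j h => ?_⟩
    induction i using Fin.cases with
    | zero =>
        rw [Fin.cons_zero] at h
        exact absurd h (Finset.disjoint_left.mp (hdisjR j) hv)
    | succ i' =>
        rw [Fin.cons_succ] at h
        induction j using Fin.cases with
        | zero => simp
        | succ j' =>
            simpa using Nat.succ_lt_succ (hf i' j' h)

lemma acyc_cons_zero_false {k : ℕ} (C : Fin (k + 1) → Finset (Fin n)) (v : Fin n)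
    (hv : v ∈ C 0) (q : Fin k → Fin n) : ¬ Acyc C (Fin.cons v q) := by
  rintro ⟨f, hf⟩
  have := hf 0 0 (by rw [Fin.cons_zero]; exact hv)
  exact lt_irrefl _ this

lemma acyc_cons_block {k : ℕ} (C : Fin (k + 1) → Finset (Fin n))
    (hdisj : ∀ i j, i ≠ j → Disjoint (C i) (C j))
    (j₀ : Fin k) (v : Fin n) (hv : v ∈ C j₀.succ) (q : Fin k → Fin n) :
    Acyc C (Fin.cons v q) ↔
      Acyc (fun t => if t = j₀ then C j₀.succ ∪ C 0 else C t.succ) q := by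
  constructor
  · rintro ⟨f, hf⟩
    refine ⟨fun j => f j.succ, fun i j h => ?_⟩
    show f j.succ < f i.succ
    replace h : q i ∈ (if j = j₀ then C j₀.succ ∪ C 0 else C j.succ) := h
    by_cases hj : j = j₀
    · subst hj
      rw [if_pos rfl, Finset.mem_union] at h
      rcases h with h | h
      · exact hf i.succ j.succ h
      · have h1 : f j.succ < f 0 := hf 0 j.succ (by rw [Fin.cons_zero]; exact hv)
        have h2 : f 0 < f i.succ := hf i.succ 0 (by rwa [Fin.cons_succ])
        exact h1.trans h2
    · rw [if_neg hj] at h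
      exact hf i.succ j.succ (by rwa [Fin.cons_succ])
  · rintro ⟨f, hf⟩
    refine ⟨Fin.cons (2 * f j₀ + 1) (fun i => 2 * f i), fun i j h => ?_⟩
    induction i using Fin.cases with
    | zero =>
        rw [Fin.cons_zero] at h
        have hj : j = j₀.succ := by
          by_contra hne
          exact absurd hv (Finset.disjoint_left.mp (hdisj _ _ hne) h)
        subst hj
        simp
    | succ i' =>
        rw [Fin.cons_succ] at h
        induction j using Fin.cases with
        | zero =>
            have h' : q i' ∈ (if j₀ = j₀ then C j₀.succ ∪ C 0 else C j₀.succ) := by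
              rw [if_pos rfl, Finset.mem_union]; exact Or.inr h
            have hlt : f j₀ < f i' := hf i' j₀ h'
            simp only [Fin.cons_zero, Fin.cons_succ]
            omega
        | succ j' =>
            have hlt : f j' < f i' := by
              apply hf i' j'
              show q i' ∈ (if j' = j₀ then C j₀.succ ∪ C 0 else C j'.succ)
              by_cases hj : j' = j₀
              · subst hj
                rw [if_pos rfl, Finset.mem_union]
                exact Or.inl h
              · rw [if_neg hj]; exact h
            simp only [Fin.cons_succ]
            omega

end Acyclic

section Fiber

lemma nat_card_fiber {α β : Type*} [Fintype α] [DecidableEq β] (P : α → Prop) (φ : α → β)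
    (F : Finset β) (h : ∀ x, P x → φ x ∈ F) :
    Nat.card {x // P x} = ∑ D ∈ F, Nat.card {x // P x ∧ φ x = D} := by
  classical
  rw [Nat.card_eq_fintype_card, Fintype.card_subtype]
  rw [Finset.card_eq_sum_card_fiberwise (f := φ) (t := F)
    (fun x hx => h x (Finset.mem_filter.mp hx).2)]
  refine Finset.sum_congr rfl fun D hD => ?_
  rw [Nat.card_eq_fintype_card, Fintype.card_subtype, Finset.filter_filter]

end Fiber

section CountAcyc

variable {n : ℕ}

lemma card_acyc_cons {k : ℕ} (C : Fin (k + 1) → Finset (Fin n)) (v : Fin n) :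
    Nat.card {p : Fin (k + 1) → Fin n // Acyc C p ∧ p 0 = v} =
    Nat.card {q : Fin k → Fin n // Acyc C (Fin.cons v q)} := by
  apply Nat.card_congr
  refine ⟨fun x => ⟨Fin.tail x.1, ?_⟩, fun y => ⟨Fin.cons v y.1, y.2, Fin.cons_zero _ _⟩,
          ?_, ?_⟩
  · obtain ⟨p, hp, hv⟩ := x
    dsimp only
    subst hv
    rwa [Fin.cons_self_tail]
  · rintro ⟨p, hp, hv⟩
    subst hv
    exact Subtype.ext (Fin.cons_self_tail p)
  · rintro ⟨q, hq⟩
    exact Subtype.ext (Fin.tail_cons (α := fun _ => Fin n) (x := v) (p := q))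

lemma countAcyc : ∀ (k : ℕ) (R : Finset (Fin n)) (C : Fin (k + 1) → Finset (Fin n)),
    R.Nonempty → (∀ i j, i ≠ j → Disjoint (C i) (C j)) → (∀ i, Disjoint R (C i)) →
    (R ∪ Finset.univ.biUnion C = Finset.univ) →
    Nat.card {p : Fin (k + 1) → Fin n // Acyc C p} = R.card * n ^ k := by
  intro k
  induction k with
  | zero =>
      intro R C hR hdisj hdisjR hcover
      have hiff : ∀ p : Fin 1 → Fin n, Acyc C p ↔ p 0 ∈ R := by
        intro p
        constructor
        · intro h
          by_contra hp0
          have hmem : p 0 ∈ R ∪ Finset.univ.biUnion C := by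
            rw [hcover]; exact Finset.mem_univ _
          rcases Finset.mem_union.mp hmem with h' | h'
          · exact hp0 h'
          · obtain ⟨j, _, hj⟩ := Finset.mem_biUnion.mp h'
            have : j = 0 := Fin.fin_one_eq_zero j
            subst this
            exact acyc_not_self_mem h 0 hj
        · intro hp0
          refine ⟨fun _ => 0, fun i j hmem => ?_⟩
          have hi : i = 0 := Fin.fin_one_eq_zero i
          subst hi
          exact absurd hmem (Finset.disjoint_left.mp (hdisjR j) hp0)
      have e : {p : Fin 1 → Fin n // Acyc C p} ≃ {v : Fin n // v ∈ R} := by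
        refine ⟨fun x => ⟨x.1 0, (hiff x.1).mp x.2⟩,
                fun y => ⟨fun _ => y.1, (hiff _).mpr y.2⟩, fun x => Subtype.ext ?_, fun y => rfl⟩
        funext i
        have : i = 0 := Fin.fin_one_eq_zero i
        subst this; rfl
      rw [Nat.card_congr e, pow_zero, mul_one]
      simp [Nat.card_eq_fintype_card]
  | succ k IH =>
      intro R C hR hdisj hdisjR hcover
      have h1 : Nat.card {p : Fin (k + 2) → Fin n // Acyc C p} =
          ∑ v : Fin n, Nat.card {q : Fin (k + 1) → Fin n // Acyc C (Fin.cons v q)} := by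
        rw [nat_card_fiber (P := Acyc C) (φ := fun p => p 0) Finset.univ
          (fun _ _ => Finset.mem_univ _)]
        exact Finset.sum_congr rfl fun v _ => card_acyc_cons C v
      have hdisjRB : Disjoint R (Finset.univ.biUnion C) :=
        Finset.disjoint_biUnion_right _ _ _ |>.mpr fun i _ => hdisjR i
      have hPD : Set.PairwiseDisjoint (↑(Finset.univ : Finset (Fin (k + 2)))) C :=
        fun a _ b _ hab => hdisj a b hab
      have hcard_sum : R.card + ∑ t, (C t).card = n := by
        have := congrArg Finset.card hcover
        rw [Finset.card_union_of_disjoint hdisjRB, Finset.card_biUnion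
          (fun a _ b _ hab => hdisj a b hab)] at this
        simpa using this
      -- value on R
      have hvalR : ∀ v ∈ R, Nat.card {q : Fin (k + 1) → Fin n // Acyc C (Fin.cons v q)} =
          (R.card + (C 0).card) * n ^ k := by
        intro v hv
        rw [Nat.card_congr (Equiv.subtypeEquivRight
          (fun q => acyc_cons_root C R hdisjR v hv q))]
        have hsplit : Finset.univ.biUnion C = C 0 ∪ (Finset.univ : Finset (Fin (k + 1))).biUnion (fun j => C j.succ) := by
          ext x
          simp only [Finset.mem_biUnion, Finset.mem_union, Finset.mem_univ, true_and]
          exact Fin.exists_fin_succ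
        have := IH (R ∪ C 0) (fun j => C j.succ)
          (hR.mono Finset.subset_union_left)
          (fun i j hne => hdisj i.succ j.succ (fun h => hne (Fin.succ_injective _ h)))
          (fun i => Finset.disjoint_union_left.mpr
            ⟨hdisjR i.succ, hdisj 0 i.succ (Fin.succ_ne_zero i).symm⟩)
          (by rw [Finset.union_assoc, ← hsplit, hcover])
        rw [this, Finset.card_union_of_disjoint (hdisjR 0)]
      -- value on C 0
      have hval0 : ∀ v ∈ C 0, Nat.card {q : Fin (k + 1) → Fin n // Acyc C (Fin.cons v q)} = 0 := by
        intro v hv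
        haveI : IsEmpty {q : Fin (k + 1) → Fin n // Acyc C (Fin.cons v q)} :=
          ⟨fun q => acyc_cons_zero_false C v hv q.1 q.2⟩
        exact Nat.card_of_isEmpty
      -- value on C j.succ
      have hvalS : ∀ (j : Fin (k + 1)), ∀ v ∈ C j.succ,
          Nat.card {q : Fin (k + 1) → Fin n // Acyc C (Fin.cons v q)} = R.card * n ^ k := by
        intro j v hv
        rw [Nat.card_congr (Equiv.subtypeEquivRight
          (fun q => acyc_cons_block C hdisj j v hv q))]
        have hbU : Finset.univ.biUnion (fun t => if t = j then C j.succ ∪ C 0 else C t.succ) =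
            Finset.univ.biUnion C := by
          ext x
          simp only [Finset.mem_biUnion, Finset.mem_univ, true_and]
          constructor
          · rintro ⟨t, ht⟩
            replace ht : x ∈ (if t = j then C j.succ ∪ C 0 else C t.succ) := ht
            by_cases htj : t = j
            · rw [htj, if_pos rfl, Finset.mem_union] at ht
              rcases ht with h | h
              · exact ⟨j.succ, h⟩
              · exact ⟨0, h⟩
            · rw [if_neg htj] at ht
              exact ⟨t.succ, ht⟩
          · rintro ⟨s, hs⟩
            rcases (Fin.exists_fin_succ (P := fun t => x ∈ C t)).mp ⟨s, hs⟩ with h | ⟨s', hs'⟩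
            · exact ⟨j, by
                show x ∈ (if j = j then C j.succ ∪ C 0 else C j.succ)
                rw [if_pos rfl]; exact Finset.mem_union_right _ h⟩
            · by_cases hsj : s' = j
              · exact ⟨j, by
                  show x ∈ (if j = j then C j.succ ∪ C 0 else C j.succ)
                  rw [if_pos rfl]; exact Finset.mem_union_left _ (hsj ▸ hs')⟩
              · exact ⟨s', by
                  show x ∈ (if s' = j then C j.succ ∪ C 0 else C s'.succ)
                  rw [if_neg hsj]; exact hs'⟩
        have := IH R (fun t => if t = j then C j.succ ∪ C 0 else C t.succ)
          hR
          (by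
            intro a b hab
            by_cases haj : a = j <;> by_cases hbj : b = j
            · exact absurd (haj.trans hbj.symm) hab
            · subst haj
              rw [if_pos rfl, if_neg hbj]
              exact Finset.disjoint_union_left.mpr
                ⟨hdisj _ _ (fun h => hbj (Fin.succ_injective _ h.symm)),
                 hdisj _ _ (Fin.succ_ne_zero b).symm⟩
            · subst hbj
              rw [if_pos rfl, if_neg haj]
              exact Finset.disjoint_union_right.mpr
                ⟨hdisj _ _ (fun h => haj (Fin.succ_injective _ h)),
                 hdisj _ _ (Fin.succ_ne_zero a)⟩
            · rw [if_neg haj, if_neg hbj]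
              exact hdisj _ _ (fun h => hab (Fin.succ_injective _ h)))
          (by
            intro i
            by_cases hij : i = j
            · rw [hij, if_pos rfl]
              exact Finset.disjoint_union_right.mpr ⟨hdisjR _, hdisjR 0⟩
            · rw [if_neg hij]
              exact hdisjR _)
          (by rw [hbU, hcover])
        exact this
      rw [h1]
      rw [show (Finset.univ : Finset (Fin n)) = R ∪ Finset.univ.biUnion C from hcover.symm]
      rw [Finset.sum_union hdisjRB, Finset.sum_biUnion hPD]
      rw [Finset.sum_congr rfl hvalR, Finset.sum_const, smul_eq_mul]
      rw [Fin.sum_univ_succ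
        (f := fun t => ∑ v ∈ C t, Nat.card {q : Fin (k + 1) → Fin n // Acyc C (Fin.cons v q)})]
      rw [Finset.sum_congr rfl hval0, Finset.sum_const, smul_eq_mul, Nat.mul_zero]
      have : ∀ j : Fin (k + 1),
          ∑ v ∈ C j.succ, Nat.card {q : Fin (k + 1) → Fin n // Acyc C (Fin.cons v q)} =
          (C j.succ).card * (R.card * n ^ k) := by
        intro j
        rw [Finset.sum_congr rfl (hvalS j), Finset.sum_const, smul_eq_mul]
      rw [Finset.sum_congr rfl (fun j _ => this j)]
      rw [← Finset.sum_mul]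
      have hsum2 : R.card + ((C 0).card + ∑ j : Fin (k + 1), (C j.succ).card) = n := by
        rw [← Fin.sum_univ_succ (f := fun t => (C t).card)]
        exact hcard_sum
      set a := R.card
      set b := (C 0).card
      set c := ∑ j : Fin (k + 1), (C j.succ).card
      calc a * ((a + b) * n ^ k) + (0 + c * (a * n ^ k))
          = a * n ^ k * (a + (b + c)) := by ring
        _ = a * n ^ (k + 1) := by rw [hsum2]; ring

section CountPart

variable {n : ℕ} {ι : Type*} [DecidableEq ι] [Fintype ι]

lemma countPart : ∀ (s : Finset ι) (f : ι → ℕ) (T : Finset (Fin n)),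
    (∑ i ∈ s, f i = T.card) →
    Nat.card {C : ι → Finset (Fin n) //
      (∀ i ∈ s, (C i).card = f i) ∧ (∀ i ∉ s, C i = ∅) ∧
      (∀ i ∈ s, ∀ j ∈ s, i ≠ j → Disjoint (C i) (C j)) ∧ s.biUnion C = T} =
    Nat.multinomial s f := by
  intro s
  induction s using Finset.cons_induction with
  | empty =>
      intro f T hT
      have hT0 : T = ∅ := Finset.card_eq_zero.mp (by simpa using hT.symm)
      subst hT0
      rw [Nat.multinomial_empty]
      haveI : Unique {C : ι → Finset (Fin n) //
          (∀ i ∈ (∅ : Finset ι), (C i).card = f i) ∧ (∀ i ∉ (∅ : Finset ι), C i = ∅) ∧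
          (∀ i ∈ (∅ : Finset ι), ∀ j ∈ (∅ : Finset ι), i ≠ j → Disjoint (C i) (C j)) ∧
          (∅ : Finset ι).biUnion C = ∅} :=
        { default := ⟨fun _ => ∅, by simp⟩
          uniq := fun x => Subtype.ext (funext fun i => x.2.2.1 i (Finset.notMem_empty i)) }
      exact Nat.card_unique
  | cons a s' ha IH =>
      intro f T hT
      rw [nat_card_fiber _ (fun C => C a) (T.powersetCard (f a)) (fun C hC => by
        refine Finset.mem_powersetCard.mpr ⟨?_, hC.1 a (Finset.mem_cons_self a s')⟩
        rw [← hC.2.2.2]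
        exact Finset.subset_biUnion_of_mem C (Finset.mem_cons_self a s'))]
      have hfiber : ∀ D ∈ T.powersetCard (f a),
          Nat.card {C : ι → Finset (Fin n) //
            ((∀ i ∈ Finset.cons a s' ha, (C i).card = f i) ∧ (∀ i ∉ Finset.cons a s' ha, C i = ∅) ∧
             (∀ i ∈ Finset.cons a s' ha, ∀ j ∈ Finset.cons a s' ha, i ≠ j → Disjoint (C i) (C j)) ∧
             (Finset.cons a s' ha).biUnion C = T) ∧ C a = D} = Nat.multinomial s' f := by
        intro D hD
        obtain ⟨hDsub, hDcard⟩ := Finset.mem_powersetCard.mp hD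
        have hTD : ∑ i ∈ s', f i = (T \ D).card := by
          rw [Finset.card_sdiff_of_subset hDsub, hDcard]
          rw [Finset.sum_cons] at hT
          omega
        rw [← IH f (T \ D) hTD]
        apply Nat.card_congr
        refine ⟨fun x => ⟨fun i => if i = a then ∅ else x.1 i, ?_⟩,
                fun y => ⟨fun i => if i = a then D else y.1 i, ?_⟩, ?_, ?_⟩
        · obtain ⟨C, ⟨⟨h1, h2, h3, h4⟩, hCa⟩⟩ := x
          dsimp only
          have hbU : s'.biUnion (fun i => if i = a then ∅ else C i) = s'.biUnion C :=
            Finset.biUnion_congr rfl (fun i hi => if_neg (ne_of_mem_of_not_mem hi ha))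
          refine ⟨fun i hi => ?_, fun i hi => ?_, fun i hi j hj hij => ?_, ?_⟩
          · rw [if_neg (ne_of_mem_of_not_mem hi ha)]
            exact h1 i (Finset.mem_cons.mpr (Or.inr hi))
          · by_cases h : i = a
            · rw [if_pos h]
            · rw [if_neg h]
              exact h2 i (by rw [Finset.mem_cons]; tauto)
          · rw [if_neg (ne_of_mem_of_not_mem hi ha), if_neg (ne_of_mem_of_not_mem hj ha)]
            exact h3 i (Finset.mem_cons.mpr (Or.inr hi)) j (Finset.mem_cons.mpr (Or.inr hj)) hij
          · rw [hbU]
            ext x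
            rw [Finset.mem_biUnion, Finset.mem_sdiff]
            constructor
            · rintro ⟨i, hi, hx⟩
              refine ⟨by
                rw [← h4]
                exact Finset.mem_biUnion.mpr ⟨i, Finset.mem_cons.mpr (Or.inr hi), hx⟩, ?_⟩
              rw [← hCa]
              exact Finset.disjoint_right.mp
                (h3 a (Finset.mem_cons_self a s') i (Finset.mem_cons.mpr (Or.inr hi))
                  (ne_of_mem_of_not_mem hi ha).symm) hx
            · rintro ⟨hxT, hxD⟩
              rw [← h4] at hxT
              obtain ⟨i, hi, hx⟩ := Finset.mem_biUnion.mp hxT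
              rcases Finset.mem_cons.mp hi with rfl | hi'
              · exact absurd (hCa ▸ hx) hxD
              · exact ⟨i, hi', hx⟩
        · obtain ⟨C', ⟨g1, g2, g3, g4⟩⟩ := y
          dsimp only
          have hbU : s'.biUnion (fun i => if i = a then D else C' i) = s'.biUnion C' :=
            Finset.biUnion_congr rfl (fun i hi => if_neg (ne_of_mem_of_not_mem hi ha))
          have hsub' : ∀ j ∈ s', C' j ⊆ T \ D := fun j hj =>
            g4 ▸ Finset.subset_biUnion_of_mem C' hj
          refine ⟨⟨fun i hi => ?_, fun i hi => ?_, fun i hi j hj hij => ?_, ?_⟩, if_pos rfl⟩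
          · rcases Finset.mem_cons.mp hi with rfl | hi'
            · rw [if_pos rfl]; exact hDcard
            · rw [if_neg (ne_of_mem_of_not_mem hi' ha)]; exact g1 i hi'
          · rw [Finset.mem_cons, not_or] at hi
            rw [if_neg hi.1]
            exact g2 i hi.2
          · rcases Finset.mem_cons.mp hi with rfl | hi'
            · rcases Finset.mem_cons.mp hj with rfl | hj'
              · exact absurd rfl hij
              · rw [if_pos rfl, if_neg (ne_of_mem_of_not_mem hj' ha)]
                exact (Finset.disjoint_sdiff.mono_right (hsub' j hj')).symm.symm
            · rcases Finset.mem_cons.mp hj with rfl | hj'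
              · rw [if_pos rfl, if_neg (ne_of_mem_of_not_mem hi' ha)]
                exact (Finset.disjoint_sdiff.mono_right (hsub' i hi')).symm
              · rw [if_neg (ne_of_mem_of_not_mem hi' ha), if_neg (ne_of_mem_of_not_mem hj' ha)]
                exact g3 i hi' j hj' hij
          · rw [Finset.cons_eq_insert, Finset.biUnion_insert]
            rw [show (if a = a then D else C' a) = D from if_pos rfl, hbU, g4]
            exact Finset.union_sdiff_of_subset hDsub
        · rintro ⟨C, ⟨⟨h1, h2, h3, h4⟩, hCa⟩⟩
          apply Subtype.ext
          funext i
          dsimp only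
          by_cases h : i = a
          · subst h; rw [if_pos rfl, hCa]
          · rw [if_neg h, if_neg h]
        · rintro ⟨C', ⟨g1, g2, g3, g4⟩⟩
          apply Subtype.ext
          funext i
          dsimp only
          by_cases h : i = a
          · subst h; rw [if_pos rfl, (g2 i ha).symm]
          · rw [if_neg h, if_neg h]
      rw [Finset.sum_congr rfl hfiber, Finset.sum_const, smul_eq_mul,
        Finset.card_powersetCard, Nat.multinomial_cons, ← hT, Finset.sum_cons]

end CountPart

section Structure

variable {n : ℕ} {k : ℕ}

lemma rel_iSup (W : Fin (k + 1) → Finset (Fin n)) (i : Fin (k + 1)) {x y : Fin n}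
    (hx : x ∈ W i) (hy : y ∈ W i) : (⨆ j, tauSetoid (W j)) x y :=
  Setoid.le_def.mp (le_iSup (fun j => tauSetoid (W j)) i) (Or.inr ⟨hx, hy⟩)

/-- Decoration: blocks, pointers, plus acyclicity. -/
def DecoP (m : Fin (k + 1) → ℕ) (r : Fin n) (C : Fin (k + 1) → Finset (Fin n))
    (p : Fin (k + 1) → Fin n) : Prop :=
  (∀ i, (C i).card = m i - 1) ∧ (∀ i j, i ≠ j → Disjoint (C i) (C j)) ∧
  Finset.univ.biUnion C = Finset.univ \ {r} ∧ Acyc C p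

variable {m : Fin (k + 1) → ℕ} {r : Fin n} {C C' : Fin (k + 1) → Finset (Fin n)}
  {p p' : Fin (k + 1) → Fin n}

lemma phi_card (hm : ∀ i, 1 ≤ m i) (h : DecoP m r C p) (i : Fin (k + 1)) :
    (insert (p i) (C i)).card = m i := by
  rw [Finset.card_insert_of_notMem (acyc_not_self_mem h.2.2.2 i), h.1 i]
  have := hm i
  omega

lemma phi_exists_root (h : DecoP m r C p) : ∃ i, p i = r := by
  obtain ⟨f, hf⟩ := h.2.2.2
  obtain ⟨i, _, hmin⟩ := Finset.exists_min_image Finset.univ f Finset.univ_nonempty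
  refine ⟨i, ?_⟩
  have hnot : ∀ j, p i ∉ C j := fun j hj =>
    absurd (hf i j hj) (not_lt.mpr (hmin j (Finset.mem_univ j)))
  have : p i ∉ Finset.univ.biUnion C := fun hmem => by
    obtain ⟨j, _, hj⟩ := Finset.mem_biUnion.mp hmem
    exact hnot j hj
  rw [h.2.2.1, Finset.mem_sdiff] at this
  push_neg at this
  simpa using this (Finset.mem_univ _)

lemma phi_cover (h : DecoP m r C p) :
    Finset.univ.biUnion (fun i => insert (p i) (C i)) = Finset.univ := by
  apply Finset.eq_univ_iff_forall.mpr
  intro v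
  rw [Finset.mem_biUnion]
  by_cases hv : v = r
  · obtain ⟨i, hi⟩ := phi_exists_root h
    exact ⟨i, Finset.mem_univ _, by rw [hv, ← hi]; exact Finset.mem_insert_self _ _⟩
  · have : v ∈ Finset.univ.biUnion C := by
      rw [h.2.2.1, Finset.mem_sdiff]
      exact ⟨Finset.mem_univ _, by simpa using hv⟩
    obtain ⟨i, _, hi⟩ := Finset.mem_biUnion.mp this
    exact ⟨i, Finset.mem_univ _, Finset.mem_insert_of_mem hi⟩

lemma phi_join (h : DecoP m r C p) :
    (⨆ i, tauSetoid (insert (p i) (C i))) = ⊤ := by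
  set S := ⨆ i, tauSetoid (insert (p i) (C i)) with hS
  obtain ⟨f, hf⟩ := h.2.2.2
  have hrel : ∀ (i : Fin (k + 1)) x y, x ∈ insert (p i) (C i) → y ∈ insert (p i) (C i) →
      S x y := fun i x y hx hy => rel_iSup (fun i => insert (p i) (C i)) i hx hy
  have key : ∀ N, ∀ i, f i ≤ N → S (p i) r := by
    intro N
    induction N using Nat.strong_induction_on with
    | _ N IH =>
        intro i hfi
        by_cases hp : p i = r
        · exact hp ▸ Setoid.refl' S r
        · have : p i ∈ Finset.univ.biUnion C := by
            rw [h.2.2.1, Finset.mem_sdiff]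
            exact ⟨Finset.mem_univ _, by simpa using hp⟩
          obtain ⟨j, _, hj⟩ := Finset.mem_biUnion.mp this
          have hlt : f j < f i := hf i j hj
          have hrec : S (p j) r := IH (f j) (lt_of_lt_of_le hlt hfi) j le_rfl
          have hstep : S (p i) (p j) :=
            hrel j _ _ (Finset.mem_insert_of_mem hj) (Finset.mem_insert_self _ _)
          exact Setoid.trans' S hstep hrec
  have hall : ∀ a, S a r := by
    intro a
    by_cases ha : a = r
    · exact ha ▸ Setoid.refl' S r
    · have : a ∈ Finset.univ.biUnion C := by
        rw [h.2.2.1, Finset.mem_sdiff]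
        exact ⟨Finset.mem_univ _, by simpa using ha⟩
      obtain ⟨i, _, hi⟩ := Finset.mem_biUnion.mp this
      have h1 : S a (p i) :=
        hrel i _ _ (Finset.mem_insert_of_mem hi) (Finset.mem_insert_self _ _)
      exact Setoid.trans' S h1 (key (f i) i le_rfl)
  exact Setoid.eq_top_iff.mpr fun x y =>
    Setoid.trans' S (hall x) (Setoid.symm' S (hall y))

lemma phi_inj (h : DecoP m r C p) (h' : DecoP m r C' p')
    (heq : ∀ i, insert (p i) (C i) = insert (p' i) (C' i)) : C = C' ∧ p = p' := by
  obtain ⟨f', hf'⟩ := h'.2.2.2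
  have hp : p = p' := by
    by_contra hne
    have hDne : (Finset.univ.filter (fun i => p i ≠ p' i)).Nonempty := by
      obtain ⟨i, hi⟩ := Function.ne_iff.mp hne
      exact ⟨i, Finset.mem_filter.mpr ⟨Finset.mem_univ _, hi⟩⟩
    obtain ⟨i, hiD, hmin⟩ := Finset.exists_min_image _ f' hDne
    have hiD' : p i ≠ p' i := (Finset.mem_filter.mp hiD).2
    have h1 : p' i ∈ insert (p i) (C i) := by
      rw [heq i]; exact Finset.mem_insert_self _ _
    have h2 : p' i ∈ C i := by
      rcases Finset.mem_insert.mp h1 with h | h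
      · exact absurd h.symm hiD'
      · exact h
    have h3 : p' i ≠ r := by
      intro hr
      have hmem : p' i ∈ Finset.univ.biUnion C :=
        Finset.mem_biUnion.mpr ⟨i, Finset.mem_univ _, h2⟩
      rw [h.2.2.1, Finset.mem_sdiff] at hmem
      exact hmem.2 (by simpa using hr)
    have h4 : p' i ∈ Finset.univ.biUnion C' := by
      rw [h'.2.2.1, Finset.mem_sdiff]
      exact ⟨Finset.mem_univ _, by simpa using h3⟩
    obtain ⟨j, _, hj⟩ := Finset.mem_biUnion.mp h4
    have hlt : f' j < f' i := hf' i j hj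
    have hij : i ≠ j := fun e => acyc_not_self_mem h'.2.2.2 i (by rw [← e] at hj; exact hj)
    have h5 : p' i ∈ insert (p j) (C j) := by
      rw [heq j]; exact Finset.mem_insert_of_mem hj
    have h6 : p' i = p j := by
      rcases Finset.mem_insert.mp h5 with hcase | hcase
      · exact hcase
      · exact absurd hcase (Finset.disjoint_left.mp (h.2.1 i j hij) h2)
    have h7 : p j ≠ p' j := by
      intro e
      have : p' j ∈ C' j := by rw [← e, ← h6]; exact hj
      exact acyc_not_self_mem h'.2.2.2 j this
    have h8 : j ∈ Finset.univ.filter (fun i => p i ≠ p' i) :=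
      Finset.mem_filter.mpr ⟨Finset.mem_univ _, h7⟩
    exact absurd hlt (not_lt.mpr (hmin j h8))
  refine ⟨funext fun i => ?_, hp⟩
  have e1 : C i = (insert (p i) (C i)).erase (p i) :=
    (Finset.erase_insert (acyc_not_self_mem h.2.2.2 i)).symm
  rw [e1, heq i, hp, Finset.erase_insert (acyc_not_self_mem h'.2.2.2 i)]

end Structure

section Surj

variable {n : ℕ} {k : ℕ}

def PS (W : Fin (k + 1) → Finset (Fin n)) (r : Fin n) (S : Finset (Fin (k + 1))) :
    Finset (Fin n) := insert r (S.biUnion W)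

variable {m : Fin (k + 1) → ℕ} {W : Fin (k + 1) → Finset (Fin n)} {r : Fin n}

lemma ext_step (hm : ∀ i, 1 ≤ m i) (hcard : ∀ i, (W i).card = m i)
    (hjoin : (⨆ i, tauSetoid (W i)) = ⊤) (S : Finset (Fin (k + 1)))
    (hS : S ≠ Finset.univ) : ∃ i, i ∉ S ∧ (W i ∩ PS W r S).Nonempty := by
  by_contra hcon
  push_neg at hcon
  have hdis : ∀ i, i ∉ S → ∀ x ∈ W i, x ∉ PS W r S := by
    intro i hi x hx hmem
    have h1 : W i ∩ PS W r S = ∅ := hcon i hi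
    have h2 : x ∈ W i ∩ PS W r S := Finset.mem_inter.mpr ⟨hx, hmem⟩
    rw [h1] at h2
    exact Finset.notMem_empty x h2
  obtain ⟨i₀, hi₀⟩ : ∃ i, i ∉ S := by
    by_contra h
    push_neg at h
    exact hS (Finset.eq_univ_iff_forall.mpr h)
  obtain ⟨b, hb⟩ : (W i₀).Nonempty :=
    Finset.card_pos.mp (by rw [hcard i₀]; exact hm i₀)
  set σ : Setoid (Fin n) :=
    ⟨fun a c => (a ∈ PS W r S ↔ c ∈ PS W r S), ⟨fun _ => Iff.rfl, Iff.symm, Iff.trans⟩⟩ with hσ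
  have hle : (⨆ i, tauSetoid (W i)) ≤ σ := by
    apply iSup_le
    intro i
    rw [Setoid.le_def]
    rintro x y (rfl | ⟨hx, hy⟩)
    · exact Iff.rfl
    · by_cases hiS : i ∈ S
      · have hsub : W i ⊆ PS W r S := fun z hz =>
          Finset.mem_insert_of_mem (Finset.mem_biUnion.mpr ⟨i, hiS, hz⟩)
        exact iff_of_true (hsub hx) (hsub hy)
      · exact iff_of_false (fun hc => hdis i hiS x hx hc) (fun hc => hdis i hiS y hy hc)
  rw [hjoin] at hle
  have hrb : σ r b := Setoid.le_def.mp hle trivial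
  exact hdis i₀ hi₀ b hb (hrb.mp (Finset.mem_insert_self _ _))

lemma lemE (hm : ∀ i, 1 ≤ m i) (hcard : ∀ i, (W i).card = m i)
    (hcover : Finset.univ.biUnion W = Finset.univ)
    (hjoin : (⨆ i, tauSetoid (W i)) = ⊤) :
    ∀ (c : ℕ) (S : Finset (Fin (k + 1))), (Finset.univ \ S).card = c →
    n ≤ (PS W r S).card + ∑ i ∈ Finset.univ \ S, (m i - 1) := by
  intro c
  induction c using Nat.strong_induction_on with
  | _ c IH =>
    intro S hc
    by_cases hS : S = Finset.univ
    · subst hS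
      have hPS : PS W r Finset.univ = Finset.univ := by
        rw [PS, hcover]
        exact Finset.insert_eq_self.mpr (Finset.mem_univ _)
      rw [hPS]
      simp
    · obtain ⟨i, hiS, hne⟩ := ext_step (r := r) hm hcard hjoin S hS
      obtain ⟨q, hq⟩ := hne
      rw [Finset.mem_inter] at hq
      have hPS' : PS W r (insert i S) = PS W r S ∪ W i := by
        rw [PS, PS, Finset.biUnion_insert]
        ext x
        simp only [Finset.mem_insert, Finset.mem_union]
        tauto
      have hsub : W i \ PS W r S ⊆ (W i).erase q := by
        intro x hx
        rw [Finset.mem_sdiff] at hx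
        exact Finset.mem_erase.mpr ⟨fun e => hx.2 (e ▸ hq.2), hx.1⟩
      have hcard2 : (W i \ PS W r S).card ≤ m i - 1 := by
        calc (W i \ PS W r S).card ≤ ((W i).erase q).card := Finset.card_le_card hsub
        _ = m i - 1 := by rw [Finset.card_erase_of_mem hq.1, hcard i]
      have hcard3 : (PS W r (insert i S)).card ≤ (PS W r S).card + (m i - 1) := by
        rw [hPS', ← Finset.union_sdiff_self_eq_union]
        exact le_trans (Finset.card_union_le _ _) (by omega)
      have himem : i ∈ Finset.univ \ S := Finset.mem_sdiff.mpr ⟨Finset.mem_univ _, hiS⟩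
      have hins : Finset.univ \ insert i S = (Finset.univ \ S).erase i :=
        Finset.sdiff_insert _ _ _
      have hcpos : 0 < c := hc ▸ Finset.card_pos.mpr ⟨i, himem⟩
      have hmeas : (Finset.univ \ insert i S).card < c := by
        rw [hins, Finset.card_erase_of_mem himem, hc]
        omega
      have hIH := IH _ hmeas (insert i S) rfl
      have hsum : ∑ j ∈ Finset.univ \ S, (m j - 1) =
          (m i - 1) + ∑ j ∈ Finset.univ \ insert i S, (m j - 1) := by
        rw [hins]
        exact (Finset.add_sum_erase _ _ himem).symm
      omega

lemma lemD (hm : ∀ i, 1 ≤ m i) (hcard : ∀ i, (W i).card = m i)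
    (hcover : Finset.univ.biUnion W = Finset.univ)
    (hjoin : (⨆ i, tauSetoid (W i)) = ⊤)
    (hn' : n = 1 + ∑ j, (m j - 1)) :
    ∀ (c : ℕ) (S : Finset (Fin (k + 1))), (Finset.univ \ S).card = c →
    (PS W r S).card = 1 + ∑ i ∈ S, (m i - 1) →
    ∃ (C : Fin (k + 1) → Finset (Fin n)) (p : Fin (k + 1) → Fin n) (f : Fin (k + 1) → ℕ),
      (∀ i, i ∉ S → (C i).card = m i - 1) ∧ (∀ i, i ∈ S → C i = ∅) ∧
      (∀ i j, i ≠ j → Disjoint (C i) (C j)) ∧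
      Finset.univ.biUnion C = Finset.univ \ PS W r S ∧
      (∀ i, i ∉ S → W i = insert (p i) (C i)) ∧
      (∀ i, i ∉ S → (p i ∈ PS W r S ∨ ∃ j, p i ∈ C j ∧ f j < f i)) := by
  intro c
  induction c using Nat.strong_induction_on with
  | _ c IH =>
    intro S hc hinv
    by_cases hS : S = Finset.univ
    · subst hS
      have hPS : PS W r Finset.univ = Finset.univ := by
        rw [PS, hcover]
        exact Finset.insert_eq_self.mpr (Finset.mem_univ _)
      refine ⟨fun _ => ∅, fun _ => r, fun _ => 0,
        fun i hi => absurd (Finset.mem_univ i) hi, fun _ _ => rfl,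
        fun _ _ _ => Finset.disjoint_empty_left _, ?_,
        fun i hi => absurd (Finset.mem_univ i) hi,
        fun i hi => absurd (Finset.mem_univ i) hi⟩
      rw [hPS]
      ext x
      simp
    · obtain ⟨i, hiS, hne⟩ := ext_step (r := r) hm hcard hjoin S hS
      obtain ⟨q0, hq0⟩ := hne
      rw [Finset.mem_inter] at hq0
      have hPS' : PS W r (insert i S) = PS W r S ∪ W i := by
        rw [PS, PS, Finset.biUnion_insert]
        ext x
        simp only [Finset.mem_insert, Finset.mem_union]
        tauto
      have himem : i ∈ Finset.univ \ S := Finset.mem_sdiff.mpr ⟨Finset.mem_univ _, hiS⟩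
      have hins : Finset.univ \ insert i S = (Finset.univ \ S).erase i :=
        Finset.sdiff_insert _ _ _
      have hcpos : 0 < c := hc ▸ Finset.card_pos.mpr ⟨i, himem⟩
      have hmeas : (Finset.univ \ insert i S).card < c := by
        rw [hins, Finset.card_erase_of_mem himem, hc]
        omega
      -- the overlap has exactly one element
      have hsd : (W i ∩ PS W r S).card + (W i \ PS W r S).card = m i := by
        rw [Finset.card_inter_add_card_sdiff, hcard i]
      have hcardins : (PS W r (insert i S)).card =
          (PS W r S).card + (W i \ PS W r S).card := by
        rw [hPS', ← Finset.union_sdiff_self_eq_union,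
          Finset.card_union_of_disjoint Finset.disjoint_sdiff]
      have hE := lemE (r := r) hm hcard hcover hjoin _ (insert i S) rfl
      have hsplit1 : ∑ j ∈ Finset.univ \ S, (m j - 1) + ∑ j ∈ S, (m j - 1) =
          ∑ j, (m j - 1) := Finset.sum_sdiff (Finset.subset_univ S)
      have hsplit2 : ∑ j ∈ Finset.univ \ S, (m j - 1) =
          (m i - 1) + ∑ j ∈ Finset.univ \ insert i S, (m j - 1) := by
        rw [hins]
        exact (Finset.add_sum_erase _ _ himem).symm
      have htpos : 0 < (W i ∩ PS W r S).card := Finset.card_pos.mpr ⟨q0, Finset.mem_inter.mpr hq0⟩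
      have hmi := hm i
      have ht1 : (W i ∩ PS W r S).card = 1 := by omega
      obtain ⟨q, hq⟩ := Finset.card_eq_one.mp ht1
      have hqW : q ∈ W i := (Finset.mem_inter.mp (hq ▸ Finset.mem_singleton_self q)).1
      have hqP : q ∈ PS W r S := (Finset.mem_inter.mp (hq ▸ Finset.mem_singleton_self q)).2
      have hCicard : (W i \ PS W r S).card = m i - 1 := by omega
      have hinv' : (PS W r (insert i S)).card = 1 + ∑ j ∈ insert i S, (m j - 1) := by
        rw [Finset.sum_insert hiS, hcardins, hCicard, hinv]
        omega
      obtain ⟨C, p, f, B1, B2, B3, B4, B5, B6⟩ := IH _ hmeas (insert i S) rfl hinv'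
      have hCi : C i = ∅ := B2 i (Finset.mem_insert_self i S)
      -- new data
      refine ⟨Function.update C i (W i \ PS W r S), Function.update p i q,
        fun j => if j = i then 0 else f j + 1, ?_, ?_, ?_, ?_, ?_, ?_⟩
      · intro j hj
        by_cases hji : j = i
        · rw [hji, Function.update_self]
          exact hji ▸ hCicard
        · rw [Function.update_of_ne hji]
          exact B1 j (by rw [Finset.mem_insert]; tauto)
      · intro j hj
        have hji : j ≠ i := fun e => hiS (e ▸ hj)
        rw [Function.update_of_ne hji]
        exact B2 j (Finset.mem_insert_of_mem hj)
      · intro a b hab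
        have hCb : ∀ x, x ∉ insert i S → C x ⊆ Finset.univ \ PS W r (insert i S) := by
          intro x hx
          rw [← B4]
          exact Finset.subset_biUnion_of_mem C (Finset.mem_univ x)
        have hCsub : ∀ x, C x ⊆ Finset.univ \ PS W r (insert i S) := by
          intro x
          by_cases hx : x ∈ insert i S
          · rw [B2 x hx]
            exact Finset.empty_subset _
          · exact hCb x hx
        have hWsub : W i \ PS W r S ⊆ PS W r (insert i S) := by
          rw [hPS']
          exact fun x hx => Finset.mem_union_right _ (Finset.mem_sdiff.mp hx).1
        by_cases hai : a = i
        · have hbi : b ≠ i := fun e => hab (by rw [hai, e])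
          rw [hai, Function.update_self, Function.update_of_ne hbi]
          refine Finset.disjoint_left.mpr fun x hx hxb => ?_
          have h1 : x ∈ PS W r (insert i S) := hWsub hx
          have h2 : x ∈ Finset.univ \ PS W r (insert i S) := hCsub b hxb
          exact (Finset.mem_sdiff.mp h2).2 h1
        · by_cases hbi : b = i
          · rw [hbi, Function.update_self, Function.update_of_ne hai]
            refine Finset.disjoint_left.mpr fun x hx hxb => ?_
            have h1 : x ∈ PS W r (insert i S) := hWsub hxb
            have h2 : x ∈ Finset.univ \ PS W r (insert i S) := hCsub a hx
            exact (Finset.mem_sdiff.mp h2).2 h1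
          · rw [Function.update_of_ne hai, Function.update_of_ne hbi]
            exact B3 a b hab
      · have hbU : Finset.univ.biUnion (Function.update C i (W i \ PS W r S)) =
            (W i \ PS W r S) ∪ Finset.univ.biUnion C := by
          ext x
          simp only [Finset.mem_biUnion, Finset.mem_union, Finset.mem_univ, true_and]
          constructor
          · rintro ⟨j, hj⟩
            by_cases hji : j = i
            · subst hji
              rw [Function.update_self] at hj
              exact Or.inl hj
            · rw [Function.update_of_ne hji] at hj
              exact Or.inr ⟨j, hj⟩
          · rintro (hx | ⟨j, hj⟩)
            · exact ⟨i, by rw [Function.update_self]; exact hx⟩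
            · have hji : j ≠ i := by
                intro e
                rw [e, hCi] at hj
                exact Finset.notMem_empty x hj
              exact ⟨j, by rw [Function.update_of_ne hji]; exact hj⟩
        rw [hbU, B4, hPS']
        ext x
        simp only [Finset.mem_union, Finset.mem_sdiff, Finset.mem_univ, true_and]
        tauto
      · intro j hj
        by_cases hji : j = i
        · rw [hji, Function.update_self, Function.update_self]
          ext x
          rw [Finset.mem_insert, Finset.mem_sdiff]
          constructor
          · intro hx
            by_cases hxP : x ∈ PS W r S
            · have hx2 : x ∈ W i ∩ PS W r S := Finset.mem_inter.mpr ⟨hx, hxP⟩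
              rw [hq] at hx2
              exact Or.inl (Finset.mem_singleton.mp hx2)
            · exact Or.inr ⟨hx, hxP⟩
          · rintro (rfl | ⟨h1, _⟩)
            · exact hqW
            · exact h1
        · rw [Function.update_of_ne hji, Function.update_of_ne hji]
          exact B5 j (by rw [Finset.mem_insert]; tauto)
      · intro j hj
        by_cases hji : j = i
        · rw [hji, Function.update_self]
          exact Or.inl hqP
        · rw [Function.update_of_ne hji]
          have hjS' : j ∉ insert i S := by rw [Finset.mem_insert]; tauto
          have hWi : W i = insert q (W i \ PS W r S) := by
            have := B5  -- unused
            ext x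
            rw [Finset.mem_insert, Finset.mem_sdiff]
            constructor
            · intro hx
              by_cases hxP : x ∈ PS W r S
              · have : x ∈ W i ∩ PS W r S := Finset.mem_inter.mpr ⟨hx, hxP⟩
                rw [hq] at this
                exact Or.inl (Finset.mem_singleton.mp this)
              · exact Or.inr ⟨hx, hxP⟩
            · rintro (rfl | ⟨h1, _⟩)
              · exact hqW
              · exact h1
          rcases B6 j hjS' with hcase | ⟨j', hj', hlt⟩
          · rw [hPS', Finset.mem_union] at hcase
            rcases hcase with hcase | hcase
            · exact Or.inl hcase
            · rw [hWi, Finset.mem_insert] at hcase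
              rcases hcase with hcase | hcase
              · exact Or.inl (hcase ▸ hqP)
              · refine Or.inr ⟨i, by rw [Function.update_self]; exact hcase, ?_⟩
                show (if i = i then 0 else f i + 1) < (if j = i then 0 else f j + 1)
                rw [if_pos rfl, if_neg hji]
                omega
          · have hj'i : j' ≠ i := by
              intro e
              rw [e, hCi] at hj'
              exact Finset.notMem_empty _ hj'
            refine Or.inr ⟨j', by rw [Function.update_of_ne hj'i]; exact hj', ?_⟩
            show (if j' = i then 0 else f j' + 1) < (if j = i then 0 else f j + 1)
            rw [if_neg hj'i, if_neg hji]
            omega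

end Surj

section Main

variable {n k : ℕ} {m : Fin (k + 1) → ℕ} {W : Fin (k + 1) → Finset (Fin n)} {r : Fin n}

lemma phi_surj (hm : ∀ i, 1 ≤ m i) (hcard : ∀ i, (W i).card = m i)
    (hcover : Finset.univ.biUnion W = Finset.univ)
    (hjoin : (⨆ i, tauSetoid (W i)) = ⊤)
    (hn' : n = 1 + ∑ j, (m j - 1)) :
    ∃ C p, DecoP m r C p ∧ ∀ i, W i = insert (p i) (C i) := by
  have hPS0 : PS W r (∅ : Finset (Fin (k + 1))) = {r} := by
    rw [PS]
    simp
  have h0 : (PS W r (∅ : Finset (Fin (k + 1)))).card =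
      1 + ∑ i ∈ (∅ : Finset (Fin (k + 1))), (m i - 1) := by
    rw [hPS0]
    simp
  obtain ⟨C, p, f, B1, B2, B3, B4, B5, B6⟩ :=
    lemD (r := r) hm hcard hcover hjoin hn' _ ∅ rfl h0
  refine ⟨C, p, ⟨fun i => B1 i (Finset.notMem_empty i), B3, by rw [B4, hPS0], ⟨f, ?_⟩⟩,
    fun i => B5 i (Finset.notMem_empty i)⟩
  intro i j hij
  rcases B6 i (Finset.notMem_empty i) with hcase | ⟨j', hj', hlt⟩
  · exfalso
    rw [hPS0, Finset.mem_singleton] at hcase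
    have hmem : p i ∈ Finset.univ.biUnion C :=
      Finset.mem_biUnion.mpr ⟨j, Finset.mem_univ _, hij⟩
    rw [B4, hPS0, Finset.mem_sdiff] at hmem
    exact hmem.2 (by rw [hcase]; exact Finset.mem_singleton_self r)
  · have hj'j : j' = j := by
      by_contra hne
      exact Finset.disjoint_left.mp (B3 j' j hne) hj' hij
    exact hj'j ▸ hlt

end Main

theorem statement5 (k : ℕ) (hk : 1 ≤ k) (m : Fin k → ℕ) (hm : ∀ i, 1 ≤ m i)
    (M : ℕ) (hM : M = ∑ i, m i) (n : ℕ) (hn : n = M - (k - 1)) :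
    Nat.card {W : Fin k → Finset (Fin n) //
        (∀ i, (W i).card = m i) ∧ Finset.univ.biUnion W = Finset.univ ∧
        (⨆ i, tauSetoid (W i)) = ⊤} =
      Nat.multinomial Finset.univ (fun i => m i - 1) * (M - (k - 1)) ^ (k - 1) := by
  obtain ⟨k', rfl⟩ : ∃ k'', k = k'' + 1 := ⟨k - 1, by omega⟩
  subst hM
  have hms : ∑ i, m i = ∑ i, (m i - 1) + (k' + 1) := by
    have h1 : ∀ i ∈ Finset.univ, m i = (m i - 1) + 1 := fun i _ => by have := hm i; omega
    rw [Finset.sum_congr rfl h1, Finset.sum_add_distrib]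
    simp [Finset.card_univ]
  have hn' : n = 1 + ∑ i, (m i - 1) := by omega
  have hn1 : 1 ≤ n := by omega
  classical
  set r : Fin n := ⟨0, by omega⟩ with hr
  -- bijection with decorations
  have e : {Cp : (Fin (k' + 1) → Finset (Fin n)) × (Fin (k' + 1) → Fin n) //
        DecoP m r Cp.1 Cp.2} ≃
      {W : Fin (k' + 1) → Finset (Fin n) //
        (∀ i, (W i).card = m i) ∧ Finset.univ.biUnion W = Finset.univ ∧
        (⨆ i, tauSetoid (W i)) = ⊤} := by
    refine Equiv.ofBijective
      (fun x => ⟨fun i => insert (x.1.2 i) (x.1.1 i),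
        fun i => phi_card hm x.2 i, phi_cover x.2, phi_join x.2⟩) ⟨?_, ?_⟩
    · intro a b hab
      have h := congrArg Subtype.val hab
      have h' : ∀ i, insert (a.1.2 i) (a.1.1 i) = insert (b.1.2 i) (b.1.1 i) :=
        fun i => congrFun h i
      obtain ⟨hC, hp⟩ := phi_inj a.2 b.2 h'
      exact Subtype.ext (Prod.ext hC hp)
    · rintro ⟨Wf, h1, h2, h3⟩
      obtain ⟨C, p, hdec, heq⟩ := phi_surj (W := Wf) (r := r) hm h1 h2 h3 hn'
      exact ⟨⟨(C, p), hdec⟩, Subtype.ext (funext fun i => (heq i).symm)⟩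
  rw [← Nat.card_congr e]
  rw [Nat.card_congr (Equiv.subtypeProdEquivSigmaSubtype
    (fun (C : Fin (k' + 1) → Finset (Fin n)) (p : Fin (k' + 1) → Fin n) => DecoP m r C p))]
  rw [nat_card_sigma']
  set Q : (Fin (k' + 1) → Finset (Fin n)) → Prop := fun C =>
    (∀ i, (C i).card = m i - 1) ∧ (∀ i j, i ≠ j → Disjoint (C i) (C j)) ∧
    Finset.univ.biUnion C = Finset.univ \ {r} with hQ
  have hterm : ∀ C : Fin (k' + 1) → Finset (Fin n),
      Nat.card {p : Fin (k' + 1) → Fin n // DecoP m r C p} = if Q C then n ^ k' else 0 := by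
    intro C
    by_cases h : Q C
    · rw [if_pos h]
      have e2 : {p : Fin (k' + 1) → Fin n // DecoP m r C p} ≃
          {p : Fin (k' + 1) → Fin n // Acyc C p} :=
        Equiv.subtypeEquivRight (fun p => ⟨fun x => x.2.2.2, fun a => ⟨h.1, h.2.1, h.2.2, a⟩⟩)
      rw [Nat.card_congr e2]
      have hdisjR : ∀ i, Disjoint {r} (C i) := by
        intro i
        rw [Finset.disjoint_singleton_left]
        intro hrC
        have hmem : r ∈ Finset.univ \ {r} := by
          rw [← h.2.2]
          exact Finset.mem_biUnion.mpr ⟨i, Finset.mem_univ _, hrC⟩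
        simp at hmem
      have hcount := countAcyc k' {r} C ⟨r, Finset.mem_singleton_self r⟩ h.2.1 hdisjR (by
        rw [h.2.2]
        exact Finset.union_sdiff_of_subset (Finset.subset_univ _))
      rw [hcount, Finset.card_singleton, one_mul]
    · rw [if_neg h]
      haveI : IsEmpty {p : Fin (k' + 1) → Fin n // DecoP m r C p} :=
        ⟨fun x => h ⟨x.2.1, x.2.2.1, x.2.2.2.1⟩⟩
      exact Nat.card_of_isEmpty
  rw [Finset.sum_congr rfl (fun C _ => hterm C), ← Finset.sum_filter, Finset.sum_const,
    smul_eq_mul]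
  have hfil : (Finset.univ.filter Q).card = Nat.multinomial Finset.univ (fun i => m i - 1) := by
    rw [← Fintype.card_subtype, ← Nat.card_eq_fintype_card]
    have hiff : ∀ C : Fin (k' + 1) → Finset (Fin n), Q C ↔
        ((∀ i ∈ Finset.univ, (C i).card = m i - 1) ∧
         (∀ i ∉ (Finset.univ : Finset (Fin (k' + 1))), C i = ∅) ∧
         (∀ i ∈ Finset.univ, ∀ j ∈ Finset.univ, i ≠ j → Disjoint (C i) (C j)) ∧
         Finset.univ.biUnion C = Finset.univ \ {r}) := by
      intro C
      constructor
      · exact fun q => ⟨fun i _ => q.1 i, fun i hi => absurd (Finset.mem_univ i) hi,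
          fun i _ j _ hij => q.2.1 i j hij, q.2.2⟩
      · exact fun b => ⟨fun i => b.1 i (Finset.mem_univ i),
          fun i j hij => b.2.2.1 i (Finset.mem_univ i) j (Finset.mem_univ j) hij, b.2.2.2⟩
    rw [Nat.card_congr (Equiv.subtypeEquivRight hiff)]
    apply countPart Finset.univ (fun i => m i - 1) (Finset.univ \ {r})
    rw [Finset.card_sdiff_of_subset (Finset.subset_univ _), Finset.card_singleton, Finset.card_univ,
      Fintype.card_fin]
    omega
  rw [hfil]
  rw [show ∑ i, m i - (k' + 1 - 1) = n by omega]
  norm_num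
end CountAcyc
end

section
/- Let d ≥ 1, let m ≥ 1, let p_1, …, p_m be monic complex polynomials of degree d, and let 1 ≤ n ≤ d. Then κ_n^{(d)}(p_1 ⊠_d ⋯ ⊠_d p_m) = ((−d)^{n−1}/(n−1)!) · Σ over all m-tuples (σ_1,…,σ_m) ∈ P(n)^m with σ_1 ∨ ⋯ ∨ σ_m = 1_n of ∏_{i=1}^m [ d^{|σ_i|−n} · μ_n(0_n, σ_i) · κ_{σ_i}^{(d)}(p_i) ], where κ_σ^{(d)}(p) := ∏_{V∈σ} κ_{|V|}^{(d)}(p). -/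
open Finset Filter

def Finpartition.toSetoidUniv {α : Type*} [Fintype α] [DecidableEq α]
    (P : Finpartition (Finset.univ : Finset α)) : Setoid α where
  r a b := ∃ V ∈ P.parts, a ∈ V ∧ b ∈ V
  iseqv := by
    constructor
    · intro a
      obtain ⟨V, hV, haV⟩ := P.exists_mem (Finset.mem_univ a)
      exact ⟨V, hV, haV, haV⟩
    · rintro a b ⟨V, hV, h1, h2⟩
      exact ⟨V, hV, h2, h1⟩
    · rintro a b c ⟨V, hV, h1, h2⟩ ⟨U, hU, h3, h4⟩
      exact ⟨V, hV, h1, (P.eq_of_mem_parts hV hU h2 h3) ▸ h4⟩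

/-- For `p(x) = Σ_{i=0}^d a_i x^{d-i}`, `atilde d p i = (-1)^i * (d.choose i)⁻¹ * a_i`. -/
noncomputable def atilde (d : ℕ) (p : Polynomial ℂ) (i : ℕ) : ℂ :=
  (-1) ^ i * ((d.choose i : ℂ))⁻¹ * p.coeff (d - i)

/-- The `n`-th finite free cumulant of a monic complex polynomial of degree `d`. -/
noncomputable def ffcumulant (d n : ℕ) (p : Polynomial ℂ) : ℂ :=
  (-(d : ℂ)) ^ (n - 1) / (Nat.factorial (n - 1) : ℂ) *
    ∑ π : Finpartition (Finset.univ : Finset (Fin n)),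
      (∏ V ∈ π.parts, atilde d p V.card) *
        ((-1) ^ (π.parts.card - 1) * (Nat.factorial (π.parts.card - 1) : ℂ))

/-- Finite free multiplicative convolution of degree-`d` polynomials. -/
noncomputable def ffmul (d : ℕ) (p q : Polynomial ℂ) : Polynomial ℂ :=
  ∑ i ∈ Finset.range (d + 1),
    Polynomial.C ((-1) ^ i * (d.choose i : ℂ) * atilde d p i * atilde d q i) *
      Polynomial.X ^ (d - i)

/-- The `m`-fold finite free multiplicative convolution power `p^{⊠_d m}`;
the empty convolution is the identity `(x-1)^d` for `⊠_d`. -/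
noncomputable def ffpow (d : ℕ) (p : Polynomial ℂ) : ℕ → Polynomial ℂ
  | 0 => (Polynomial.X - 1) ^ d
  | m + 1 => ffmul d (ffpow d p m) p

/-- Finite free multiplicative convolution `p 0 ⊠_d ⋯ ⊠_d p (m-1)` of a family. -/
noncomputable def ffconv (d m : ℕ) (p : Fin m → Polynomial ℂ) : Polynomial ℂ :=
  (List.ofFn p).foldr (ffmul d) ((Polynomial.X - 1) ^ d)


open Polynomial
lemma atilde_ffmul (d : ℕ) (p q : Polynomial ℂ) (i : ℕ) (hi : i ≤ d) :
    atilde d (ffmul d p q) i = atilde d p i * atilde d q i := by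
  have hc : ((d.choose i : ℂ)) ≠ 0 := Nat.cast_ne_zero.mpr (Nat.choose_pos hi).ne'
  have hcoeff : (ffmul d p q).coeff (d - i)
      = (-1) ^ i * (d.choose i : ℂ) * atilde d p i * atilde d q i := by
    rw [ffmul, finset_sum_coeff, Finset.sum_eq_single i]
    · rw [coeff_C_mul, coeff_X_pow, if_pos rfl, mul_one]
    · intro j hj hji
      rw [coeff_C_mul, coeff_X_pow, if_neg, mul_zero]
      rw [Finset.mem_range] at hj
      omega
    · intro h
      exact absurd (Finset.mem_range.mpr (by omega)) h
  have : atilde d (ffmul d p q) i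
      = (-1) ^ i * ((d.choose i : ℂ))⁻¹ * ((ffmul d p q).coeff (d - i)) := rfl
  rw [this, hcoeff]
  field_simp
  ring_nf
  rw [mul_comm i 2, pow_mul, neg_one_sq, one_pow, mul_one]

lemma atilde_base (d : ℕ) (i : ℕ) (hi : i ≤ d) :
    atilde d ((Polynomial.X - 1) ^ d) i = 1 := by
  have hc : ((d.choose i : ℂ)) ≠ 0 := Nat.cast_ne_zero.mpr (Nat.choose_pos hi).ne'
  have h1 : (Polynomial.X - 1 : Polynomial ℂ) = Polynomial.X + Polynomial.C (-1) := by
    simp [sub_eq_add_neg]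
  rw [atilde, h1, coeff_X_add_C_pow]
  have h2 : d - (d - i) = i := by omega
  rw [h2, Nat.choose_symm hi]
  field_simp
  rw [← pow_mul, mul_comm i 2, pow_mul, neg_one_sq, one_pow]

lemma atilde_foldr (d : ℕ) (i : ℕ) (hi : i ≤ d) (l : List (Polynomial ℂ)) :
    atilde d (l.foldr (ffmul d) ((Polynomial.X - 1) ^ d)) i
      = (l.map (fun p => atilde d p i)).prod := by
  induction l with
  | nil => simpa using atilde_base d i hi
  | cons h t ih =>
    simp only [List.foldr_cons, List.map_cons, List.prod_cons]
    rw [atilde_ffmul d _ _ i hi, ih]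

lemma atilde_ffconv (d m : ℕ) (p : Fin m → Polynomial ℂ) (i : ℕ) (hi : i ≤ d) :
    atilde d (ffconv d m p) i = ∏ j, atilde d (p j) i := by
  rw [ffconv, atilde_foldr d i hi]
  rw [List.map_ofFn]
  rw [List.prod_ofFn]
  rfl

section Combinatorics

noncomputable def cmu (k : ℕ) : ℂ := (-1) ^ (k - 1) * (Nat.factorial (k - 1) : ℂ)

noncomputable def muB {α : Type*} [DecidableEq α] {s : Finset α} (π : Finpartition s) : ℂ :=
  ∏ V ∈ π.parts, cmu V.card

variable {α : Type*} [DecidableEq α]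

open scoped Classical

lemma sum_fiber_part (s : Finset α) {a : α} (ha : a ∈ s) (F : Finpartition s → ℂ) :
    ∑ π : Finpartition s, F π
      = ∑ t ∈ s.powerset.filter (fun t => a ∈ t),
          ∑ π ∈ (univ : Finset (Finpartition s)).filter (fun π => π.part a = t), F π := by
  rw [Finset.sum_fiberwise_of_maps_to]
  intro π _
  simp only [mem_filter, mem_powerset]
  exact ⟨π.le (π.part_mem.2 ha), π.mem_part ha⟩

lemma copy_self {s : Finset α} (P : Finpartition s) (h : s = s) : P.copy h = P := by
  ext V; simp [Finpartition.copy]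

lemma extend_avoid {s : Finset α} (π : Finpartition s) {a : α} (ha : a ∈ s)
    (h1 : π.part a ≠ ⊥) (h2 : Disjoint (s \ π.part a) (π.part a))
    (h3 : (s \ π.part a) ⊔ π.part a = s) :
    (π.avoid (π.part a)).extend h1 h2 h3 = π := by
  ext V
  simp only [Finpartition.extend, Finset.mem_insert, Finpartition.mem_avoid]
  constructor
  · rintro (rfl | ⟨W, hW, hWle, rfl⟩)
    · exact π.part_mem.2 ha
    · have hne : W ≠ π.part a := by rintro rfl; exact hWle le_rfl
      have : Disjoint W (π.part a) := π.disjoint hW (π.part_mem.2 ha) hne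
      rwa [Finset.sdiff_eq_self_of_disjoint this]
  · intro hV
    rcases eq_or_ne V (π.part a) with rfl | hne
    · exact Or.inl rfl
    · have hd : Disjoint V (π.part a) := π.disjoint hV (π.part_mem.2 ha) hne
      refine Or.inr ⟨V, hV, ?_, Finset.sdiff_eq_self_of_disjoint hd⟩
      intro hle
      have : V = ⊥ := by
        have := hd.mono_left (le_refl V)
        exact Finset.eq_empty_of_forall_notMem fun x hx =>
          (Finset.disjoint_left.1 hd) hx (hle hx)
      exact π.ne_bot hV this

lemma avoid_extend {s t : Finset α} (P : Finpartition (s \ t)) (h1 : t ≠ ⊥)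
    (h2 : Disjoint (s \ t) t) (h3 : (s \ t) ⊔ t = s) :
    (P.extend h1 h2 h3).avoid t = P := by
  ext V
  simp only [Finpartition.mem_avoid, Finpartition.extend, Finset.mem_insert]
  constructor
  · rintro ⟨W, (rfl | hW), hWle, rfl⟩
    · exact absurd le_rfl hWle
    · have hd : Disjoint W t := Finset.disjoint_of_subset_left (P.le hW) h2
      rwa [Finset.sdiff_eq_self_of_disjoint hd]
  · intro hV
    have hd : Disjoint V t := Finset.disjoint_of_subset_left (P.le hV) h2
    refine ⟨V, Or.inr hV, ?_, Finset.sdiff_eq_self_of_disjoint hd⟩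
    intro hle
    refine P.ne_bot hV (Finset.eq_empty_of_forall_notMem fun x hx =>
      (Finset.disjoint_left.1 hd) hx (hle hx))

lemma fiber_sum_eq (s : Finset α) {a : α} (ha : a ∈ s) {t : Finset α} (hts : t ⊆ s) (hat : a ∈ t)
    (F : Finpartition s → ℂ) (G : Finpartition (s \ t) → ℂ)
    (hFG : ∀ P : Finpartition (s \ t),
      F (P.extend (α := Finset α) (fun h => absurd hat (by simp [h]))
        sdiff_disjoint (by rw [sup_eq_union]; exact Finset.sdiff_union_of_subset hts)) = G P) :
    ∑ π ∈ (univ : Finset (Finpartition s)).filter (fun π => π.part a = t), F π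
      = ∑ P : Finpartition (s \ t), G P := by
  have htne : (t : Finset α) ≠ ⊥ := fun h => absurd hat (by simp [h])
  have hsup : (s \ t) ⊔ t = s := by rw [sup_eq_union]; exact Finset.sdiff_union_of_subset hts
  refine Finset.sum_bij' (fun π hπ => ((π.avoid t).copy (by
      have : π.part a = t := (Finset.mem_filter.1 hπ).2
      rw [← this]) : Finpartition (s \ t)))
    (fun P _ => P.extend (α := Finset α) htne sdiff_disjoint hsup) ?_ ?_ ?_ ?_ ?_
  · intro π _; exact mem_univ _
  · intro P _
    simp only [mem_filter, mem_univ, true_and]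
    exact Finpartition.part_eq_of_mem _ (by simp [Finpartition.extend]) hat
  · intro π hπ
    have hpt : π.part a = t := (Finset.mem_filter.1 hπ).2
    subst hpt
    rw [copy_self, extend_avoid π ha htne sdiff_disjoint hsup]
  · intro P _
    rw [copy_self, avoid_extend]
  · intro π hπ
    have hpt : π.part a = t := (Finset.mem_filter.1 hπ).2
    subst hpt
    rw [← hFG]
    congr 1
    rw [copy_self]
    exact (extend_avoid π ha htne sdiff_disjoint hsup).symm

lemma muB_extend {s t : Finset α} (P : Finpartition (s \ t)) (h1 : t ≠ ⊥) (h2 : Disjoint (s \ t) t)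
    (h3 : (s \ t) ⊔ t = s) :
    muB (P.extend h1 h2 h3) = cmu t.card * muB P := by
  rw [muB, Finpartition.extend]
  dsimp only
  rw [Finset.prod_insert]
  · rfl
  · intro ht
    obtain ⟨x, hx⟩ := Finset.nonempty_iff_ne_empty.2 h1
    have hsub : t ⊆ s \ t := P.le ht
    exact (Finset.mem_sdiff.1 (hsub hx)).2 hx

lemma cmu_one : cmu 1 = 1 := by simp [cmu]

lemma cmu_step (n : ℕ) (h : 2 ≤ n) : cmu n + ((n : ℂ) - 1) * cmu (n - 1) = 0 := by
  obtain ⟨k, rfl⟩ : ∃ k, n = k + 2 := ⟨n - 2, by omega⟩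
  simp only [cmu]
  simp only [Nat.succ_sub_one, Nat.factorial_succ]
  push_cast
  ring

lemma sum_finpartition_bot (G : Finpartition (⊥ : Finset α) → ℂ) :
    ∑ P : Finpartition (⊥ : Finset α), G P = G (Finpartition.empty _) := by
  rw [Fintype.sum_eq_single (Finpartition.empty _)]
  intro P hP
  exact absurd (Subsingleton.elim _ _) hP

lemma muB_sum : ∀ s : Finset α, s.Nonempty →
    (∑ π : Finpartition s, muB π) = if s.card = 1 then 1 else 0 := by
  intro s
  induction s using Finset.strongInduction with
  | _ s ih =>
    intro hs
    obtain ⟨a, ha⟩ := hs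
    rw [sum_fiber_part s ha]
    have hstep : ∀ t ∈ s.powerset.filter (fun t => a ∈ t),
        (∑ π ∈ (univ : Finset (Finpartition s)).filter (fun π => π.part a = t), muB π)
          = cmu t.card *
            (if s.card - t.card = 0 then 1 else if s.card - t.card = 1 then 1 else 0) := by
      intro t hmem
      rw [mem_filter, mem_powerset] at hmem
      obtain ⟨hts, hat⟩ := hmem
      rw [fiber_sum_eq s ha hts hat _ (fun P => cmu t.card * muB P)
        (fun P => muB_extend P _ _ _), ← Finset.mul_sum]
      congr 1
      have hcard : (s \ t).card = s.card - t.card := Finset.card_sdiff_of_subset hts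
      rcases Finset.eq_empty_or_nonempty (s \ t) with he | hne
      · rw [if_pos (by rw [← hcard, he]; simp)]
        have he' : s \ t = (⊥ : Finset α) := he
        rw [show (∑ P : Finpartition (s \ t), muB P)
            = ∑ P : Finpartition (⊥ : Finset α), muB P by rw [he']]
        rw [sum_finpartition_bot]
        simp [muB]
      · have hlt : s \ t ⊂ s := by
          refine Finset.ssubset_iff_of_subset Finset.sdiff_subset |>.mpr ⟨a, ha, by simp [hat]⟩
        rw [ih (s \ t) hlt hne, hcard]
        have h0 : s.card - t.card ≠ 0 := by rw [← hcard]; exact (Finset.card_pos.mpr hne).ne'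
        conv_rhs => rw [if_neg h0]
    rw [Finset.sum_congr rfl hstep]
    have hre : ∑ t ∈ s.powerset.filter (fun t => a ∈ t),
        cmu t.card * (if s.card - t.card = 0 then 1 else if s.card - t.card = 1 then 1 else 0)
        = ∑ u ∈ (s.erase a).powerset,
            cmu (s.card - u.card) * (if u.card = 0 then (1:ℂ) else if u.card = 1 then 1 else 0) := by
      refine Finset.sum_bij' (fun t _ => s \ t) (fun u _ => s \ u) ?_ ?_ ?_ ?_ ?_
      · intro t ht
        rw [mem_filter, mem_powerset] at ht
        rw [mem_powerset]
        intro x hx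
        rw [Finset.mem_sdiff] at hx
        rw [Finset.mem_erase]
        exact ⟨fun h => hx.2 (h ▸ ht.2), hx.1⟩
      · intro u hu
        rw [mem_powerset] at hu
        rw [mem_filter, mem_powerset]
        refine ⟨Finset.sdiff_subset, ?_⟩
        rw [Finset.mem_sdiff]
        exact ⟨ha, fun h => (Finset.mem_erase.1 (hu h)).1 rfl⟩
      · intro t ht
        rw [mem_filter, mem_powerset] at ht
        exact Finset.sdiff_sdiff_eq_self ht.1
      · intro u hu
        rw [mem_powerset] at hu
        exact Finset.sdiff_sdiff_eq_self ((hu.trans (Finset.erase_subset a s)))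
      · intro t ht
        rw [mem_filter, mem_powerset] at ht
        have h1 : (s \ t).card = s.card - t.card := Finset.card_sdiff_of_subset ht.1
        have h2 : s.card - (s \ t).card = t.card := by
          rw [h1]
          have := Finset.card_le_card ht.1
          omega
        rw [h1]
        have h3 : s.card - (s.card - t.card) = t.card := by
          have := Finset.card_le_card ht.1
          omega
        rw [h3]
    rw [hre]
    have hpt : ∀ u ∈ (s.erase a).powerset,
        cmu (s.card - u.card) * (if u.card = 0 then (1:ℂ) else if u.card = 1 then 1 else 0)
          = (if u = ∅ then cmu s.card else 0) + (if u.card = 1 then cmu (s.card - 1) else 0) := by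
      intro u _
      rcases Finset.eq_empty_or_nonempty u with rfl | hu
      · simp
      · have h0 : u.card ≠ 0 := (Finset.card_pos.mpr hu).ne'
        have h0' : u ≠ ∅ := Finset.nonempty_iff_ne_empty.1 hu
        rw [if_neg h0, if_neg h0']
        rcases eq_or_ne u.card 1 with h1 | h1
        · rw [if_pos h1, if_pos h1, h1, mul_one, zero_add]
        · rw [if_neg h1, if_neg h1, mul_zero, zero_add]
    rw [Finset.sum_congr rfl hpt, Finset.sum_add_distrib]
    rw [Finset.sum_ite_eq' ((s.erase a).powerset) (∅ : Finset α) (fun _ => cmu s.card)]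
    rw [if_pos (Finset.empty_mem_powerset _)]
    rw [← Finset.sum_filter]
    rw [Finset.sum_const]
    have hcard1 : ((s.erase a).powerset.filter (fun u => u.card = 1)).card = s.card - 1 := by
      have : (s.erase a).powerset.filter (fun u => u.card = 1)
          = Finset.powersetCard 1 (s.erase a) := by
        rw [Finset.powersetCard_eq_filter]
      rw [this, Finset.card_powersetCard, Nat.choose_one_right, Finset.card_erase_of_mem ha]
    rw [hcard1, nsmul_eq_mul]
    rcases eq_or_ne s.card 1 with h1 | h1
    · rw [if_pos h1, h1]
      simp [cmu_one]
    · rw [if_neg h1]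
      have h2 : 2 ≤ s.card := by
        have := Finset.card_pos.mpr ⟨a, ha⟩
        omega
      have := cmu_step s.card h2
      have hc : ((s.card - 1 : ℕ) : ℂ) = (s.card : ℂ) - 1 := by
        push_cast [Nat.cast_sub (by omega : 1 ≤ s.card)]
        ring
      rw [hc]
      linear_combination this

/-- Restriction of a refinement `τ ≤ π` to a part `W` of `π`. -/
def restrictP {s : Finset α} (τ : Finpartition s) {π : Finpartition s} (hτπ : τ ≤ π)
    {W : Finset α} (hW : W ∈ π.parts) : Finpartition W where
  parts := τ.parts.filter (· ⊆ W)
  supIndep := τ.supIndep.subset (Finset.filter_subset _ _)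
  sup_parts := by
    apply le_antisymm
    · exact Finset.sup_le fun V hV => (Finset.mem_filter.1 hV).2
    · intro x hx
      have hxs : x ∈ s := π.le hW hx
      obtain ⟨V, hV, hxV⟩ := τ.exists_mem hxs
      obtain ⟨W', hW', hVW'⟩ := hτπ hV
      have hWW : W' = W := π.eq_of_mem_parts hW' hW (hVW' hxV) hx
      subst hWW
      exact Finset.mem_sup.2 ⟨V, Finset.mem_filter.2 ⟨hV, hVW'⟩, hxV⟩
  bot_notMem h := τ.bot_notMem (Finset.mem_filter.1 h).1

lemma restrictP_parts {s : Finset α} (τ : Finpartition s) {π : Finpartition s} (hτπ : τ ≤ π)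
    {W : Finset α} (hW : W ∈ π.parts) :
    (restrictP τ hτπ hW).parts = τ.parts.filter (· ⊆ W) := rfl

lemma bind_le {s : Finset α} (π : Finpartition s) (Q : ∀ i ∈ π.parts, Finpartition i) :
    π.bind Q ≤ π := by
  intro V hV
  rw [Finpartition.mem_bind] at hV
  obtain ⟨W, hW, hVW⟩ := hV
  exact ⟨W, hW, (Q W hW).le hVW⟩

lemma bind_restrict {s : Finset α} (τ π : Finpartition s) (hτπ : τ ≤ π) :
    π.bind (fun W hW => restrictP τ hτπ hW) = τ := by
  ext V
  rw [Finpartition.mem_bind]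
  constructor
  · rintro ⟨W, hW, hV⟩
    exact (Finset.mem_filter.1 hV).1
  · intro hV
    obtain ⟨W, hW, hVW⟩ := hτπ hV
    exact ⟨W, hW, Finset.mem_filter.2 ⟨hV, hVW⟩⟩

lemma restrict_bind {s : Finset α} (π : Finpartition s) (Q : ∀ i ∈ π.parts, Finpartition i)
    {W : Finset α} (hW : W ∈ π.parts) :
    (π.bind Q).parts.filter (· ⊆ W) = (Q W hW).parts := by
  ext V
  rw [Finset.mem_filter, Finpartition.mem_bind]
  constructor
  · rintro ⟨⟨W', hW', hV⟩, hVW⟩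
    have : W' = W := by
      by_contra hne
      have hd : Disjoint W' W := π.disjoint hW' hW hne
      obtain ⟨x, hx⟩ := (Q W' hW').nonempty_of_mem_parts hV
      exact Finset.disjoint_left.1 hd ((Q W' hW').le hV hx) (hVW hx)
    subst this
    exact hV
  · intro hV
    exact ⟨⟨W, hW, hV⟩, (Q W hW).le hV⟩

lemma sum_refines_eq_prod {s : Finset α} (π : Finpartition s)
    (g : (W : {x // x ∈ π.parts}) → Finset (Finset α) → ℂ) :
    ∑ τ ∈ (univ : Finset (Finpartition s)).filter (· ≤ π),
        ∏ W ∈ π.parts.attach, g W (τ.parts.filter (· ⊆ W.1))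
      = ∏ W ∈ π.parts.attach, ∑ R : Finpartition W.1, g W R.parts := by
  have hrhs : ∏ W ∈ π.parts.attach, ∑ R : Finpartition W.1, g W R.parts
      = ∑ Q ∈ Fintype.piFinset (fun W : {x // x ∈ π.parts} =>
          (univ : Finset (Finpartition W.1))),
          ∏ W ∈ π.parts.attach, g W ((Q W).parts) := by
    rw [← Finset.univ_eq_attach, Finset.prod_univ_sum]
  rw [hrhs]
  refine Finset.sum_bij' (fun τ hτ => fun W => restrictP τ (Finset.mem_filter.1 hτ).2 W.2)
    (fun Q _ => π.bind (fun W hW => Q ⟨W, hW⟩)) ?_ ?_ ?_ ?_ ?_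
  · intro τ hτ
    simp [Fintype.mem_piFinset]
  · intro Q _
    rw [Finset.mem_filter]
    exact ⟨mem_univ _, bind_le _ _⟩
  · intro τ hτ
    exact bind_restrict τ π (Finset.mem_filter.1 hτ).2
  · intro Q _
    funext W
    apply Finpartition.ext
    rw [restrictP_parts, restrict_bind π _ W.2]
  · intro τ hτ
    rfl

/-- `μ(τ, ρ)` for `τ ≤ ρ`: product over parts `W` of `ρ` of `cmu` of the number of
parts of `τ` inside `W`. -/
noncomputable def muRel {s : Finset α} (τ ρ : Finpartition s) : ℂ :=
  ∏ W ∈ ρ.parts, cmu (τ.parts.filter (· ⊆ W)).card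

lemma prod_parts_factor {s : Finset α} {π τ : Finpartition s} (h : τ ≤ π) (f : Finset α → ℂ) :
    ∏ V ∈ τ.parts, f V = ∏ W ∈ π.parts.attach, ∏ V ∈ τ.parts.filter (· ⊆ W.1), f V := by
  conv_lhs => rw [← bind_restrict τ π h]
  rw [Finpartition.bind_parts]
  rw [Finset.prod_biUnion]
  · exact Finset.prod_congr rfl fun W _ => rfl
  · intro W _ W' _ hWW'
    simp only [Function.onFun]
    rw [Finset.disjoint_left]
    intro V hV hV'
    rw [restrictP_parts, Finset.mem_filter] at hV hV'
    have hd : Disjoint W.1 W'.1 := π.disjoint W.2 W'.2 (fun h => hWW' (Subtype.ext h))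
    obtain ⟨x, hx⟩ := τ.nonempty_of_mem_parts hV.1
    exact Finset.disjoint_left.1 hd (hV.2 hx) (hV'.2 hx)

/-- Grouping of the parts of `τ` induced by a coarser partition `ρ`. -/
def groupOf {s : Finset α} (τ ρ : Finpartition s) (h : τ ≤ ρ) :
    Finpartition (τ.parts : Finset (Finset α)) where
  parts := ρ.parts.image fun W => τ.parts.filter (· ⊆ W)
  supIndep := by
    rw [Finset.supIndep_iff_pairwiseDisjoint]
    rintro B₁ hB₁ B₂ hB₂ hne
    rw [Finset.mem_coe, Finset.mem_image] at hB₁ hB₂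
    obtain ⟨W₁, hW₁, rfl⟩ := hB₁
    obtain ⟨W₂, hW₂, rfl⟩ := hB₂
    have hWne : W₁ ≠ W₂ := fun h => hne (by rw [h])
    have hd : Disjoint W₁ W₂ := ρ.disjoint hW₁ hW₂ hWne
    simp only [Function.onFun, id_eq]
    rw [Finset.disjoint_left]
    intro V hV hV'
    simp only [id_eq, Finset.mem_filter] at hV hV'
    obtain ⟨x, hx⟩ := τ.nonempty_of_mem_parts hV.1
    exact Finset.disjoint_left.1 hd (hV.2 hx) (hV'.2 hx)
  sup_parts := by
    apply le_antisymm
    · apply Finset.sup_le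
      intro B hB
      rw [Finset.mem_image] at hB
      obtain ⟨W, _, rfl⟩ := hB
      exact Finset.filter_subset _ _
    · intro V hV
      obtain ⟨W, hW, hVW⟩ := h hV
      exact Finset.mem_sup.2 ⟨_, Finset.mem_image_of_mem _ hW, Finset.mem_filter.2 ⟨hV, hVW⟩⟩
  bot_notMem := by
    rw [Finset.mem_image]
    rintro ⟨W, hW, hB⟩
    obtain ⟨V, hV, hVW⟩ := Finpartition.exists_le_of_le h hW
    have : V ∈ τ.parts.filter (· ⊆ W) := Finset.mem_filter.2 ⟨hV, hVW⟩
    rw [hB] at this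
    exact absurd this (Finset.notMem_empty V)

lemma groupOf_sup {s : Finset α} (τ ρ : Finpartition s) (h : τ ≤ ρ) {W : Finset α}
    (hW : W ∈ ρ.parts) : (τ.parts.filter (· ⊆ W)).sup id = W :=
  (restrictP τ h hW).sup_parts

lemma groupOf_injOn {s : Finset α} (τ ρ : Finpartition s) (h : τ ≤ ρ) :
    Set.InjOn (fun W => τ.parts.filter (· ⊆ W)) ρ.parts := by
  intro W₁ h₁ W₂ h₂ he
  rw [← groupOf_sup τ ρ h h₁, ← groupOf_sup τ ρ h h₂]
  dsimp only at he
  rw [he]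

lemma muRel_eq_muB {s : Finset α} (τ ρ : Finpartition s) (h : τ ≤ ρ) :
    muRel τ ρ = muB (groupOf τ ρ h) := by
  rw [muRel, muB, groupOf]
  dsimp only
  rw [Finset.prod_image (groupOf_injOn τ ρ h)]

lemma groupOf_card {s : Finset α} (τ ρ : Finpartition s) (h : τ ≤ ρ) :
    (groupOf τ ρ h).parts.card = ρ.parts.card := by
  rw [groupOf]
  dsimp only
  rw [Finset.card_image_of_injOn (groupOf_injOn τ ρ h)]

/-- Merge the groups of a partition of the set of parts of `τ` into a coarser partition. -/
def ungroup {s : Finset α} (τ : Finpartition s)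
    (G : Finpartition (τ.parts : Finset (Finset α))) : Finpartition s where
  parts := G.parts.image fun B => B.sup id
  supIndep := by
    rw [Finset.supIndep_iff_pairwiseDisjoint]
    rintro x hx y hy hne
    rw [Finset.mem_coe, Finset.mem_image] at hx hy
    obtain ⟨B₁, hB₁, rfl⟩ := hx
    obtain ⟨B₂, hB₂, rfl⟩ := hy
    have hBne : B₁ ≠ B₂ := fun h => hne (by rw [h])
    have hBd : Disjoint B₁ B₂ := G.disjoint hB₁ hB₂ hBne
    simp only [Function.onFun, id_eq]
    rw [Finset.disjoint_sup_right]
    intro V hV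
    rw [Finset.disjoint_sup_left]
    intro V' hV'
    have hVne : V' ≠ V := fun h => Finset.disjoint_left.1 hBd (h ▸ hV') hV
    exact τ.disjoint (G.le hB₂ hV) (G.le hB₁ hV') (fun h => hVne (h.symm)) |>.symm
  sup_parts := by
    apply le_antisymm
    · apply Finset.sup_le
      intro x hx
      rw [Finset.mem_image] at hx
      obtain ⟨B, hB, rfl⟩ := hx
      refine Finset.sup_le fun V hV => τ.le (G.le hB hV)
    · intro x hx
      rw [← τ.sup_parts] at hx
      obtain ⟨V, hV, hxV⟩ := Finset.mem_sup.1 hx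
      have : V ∈ G.parts.sup id := by rw [G.sup_parts]; exact hV
      obtain ⟨B, hB, hVB⟩ := Finset.mem_sup.1 this
      refine Finset.mem_sup.2 ⟨B.sup id, Finset.mem_image_of_mem _ hB, ?_⟩
      exact (Finset.le_sup (f := id) hVB : V ≤ B.sup id) hxV
  bot_notMem := by
    rw [Finset.mem_image]
    rintro ⟨B, hB, hBs⟩
    obtain ⟨V, hV⟩ := G.nonempty_of_mem_parts hB
    obtain ⟨x, hx⟩ := τ.nonempty_of_mem_parts (G.le hB hV)
    have : x ∈ B.sup id := (Finset.le_sup (f := id) hV : V ≤ B.sup id) hx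
    rw [hBs] at this
    exact absurd this (Finset.notMem_empty x)

lemma le_ungroup {s : Finset α} (τ : Finpartition s)
    (G : Finpartition (τ.parts : Finset (Finset α))) : τ ≤ ungroup τ G := by
  intro V hV
  have : V ∈ G.parts.sup id := by rw [G.sup_parts]; exact hV
  obtain ⟨B, hB, hVB⟩ := Finset.mem_sup.1 this
  exact ⟨B.sup id, Finset.mem_image_of_mem _ hB, Finset.le_sup (f := id) hVB⟩

lemma ungroup_mono {s : Finset α} (τ : Finpartition s)
    {G G' : Finpartition (τ.parts : Finset (Finset α))} (h : G ≤ G') :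
    ungroup τ G ≤ ungroup τ G' := by
  intro x hx
  rw [ungroup] at hx ⊢
  rw [Finset.mem_image] at hx
  obtain ⟨B, hB, rfl⟩ := hx
  obtain ⟨B', hB', hBB'⟩ := h hB
  exact ⟨B'.sup id, Finset.mem_image_of_mem _ hB', Finset.sup_mono hBB'⟩

lemma ungroup_groupOf {s : Finset α} (τ ρ : Finpartition s) (h : τ ≤ ρ) :
    ungroup τ (groupOf τ ρ h) = ρ := by
  ext W
  show W ∈ Finset.image _ (Finset.image _ ρ.parts) ↔ _
  rw [Finset.image_image]
  constructor
  · rintro hW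
    rw [Finset.mem_image] at hW
    obtain ⟨W', hW', rfl⟩ := hW
    rw [Function.comp_apply, groupOf_sup τ ρ h hW']
    exact hW'
  · intro hW
    refine Finset.mem_image.2 ⟨W, hW, ?_⟩
    rw [Function.comp_apply, groupOf_sup τ ρ h hW]

lemma filter_subset_sup_eq {s : Finset α} (τ : Finpartition s)
    (G : Finpartition (τ.parts : Finset (Finset α))) {B : Finset (Finset α)} (hB : B ∈ G.parts) :
    τ.parts.filter (· ⊆ B.sup id) = B := by
  ext V
  rw [Finset.mem_filter]
  constructor
  · rintro ⟨hV, hVB⟩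
    have : V ∈ G.parts.sup id := by rw [G.sup_parts]; exact hV
    obtain ⟨B', hB', hVB'⟩ := Finset.mem_sup.1 this
    rcases eq_or_ne B' B with rfl | hne
    · exact hVB'
    · exfalso
      have hd : Disjoint B' B := G.disjoint hB' hB hne
      have hVd : Disjoint V (B.sup id) := by
        rw [Finset.disjoint_sup_right]
        intro W hW
        refine τ.disjoint hV (G.le hB hW) ?_
        rintro rfl
        exact Finset.disjoint_left.1 hd hVB' hW
      obtain ⟨x, hx⟩ := τ.nonempty_of_mem_parts hV
      exact Finset.disjoint_left.1 hVd hx (hVB hx)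
  · intro hV
    exact ⟨G.le hB hV, Finset.le_sup (f := id) hV⟩

lemma groupOf_ungroup {s : Finset α} (τ : Finpartition s)
    (G : Finpartition (τ.parts : Finset (Finset α))) :
    groupOf τ (ungroup τ G) (le_ungroup τ G) = G := by
  ext B
  show B ∈ Finset.image _ (Finset.image _ G.parts) ↔ _
  rw [Finset.image_image]
  constructor
  · intro hB
    rw [Finset.mem_image] at hB
    obtain ⟨B', hB', rfl⟩ := hB
    rw [Function.comp_apply, filter_subset_sup_eq τ G hB']
    exact hB'
  · intro hB
    refine Finset.mem_image.2 ⟨B, hB, ?_⟩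
    rw [Function.comp_apply, filter_subset_sup_eq τ G hB]

lemma groupOf_mono {s : Finset α} {τ ρ ρ' : Finpartition s} (h : τ ≤ ρ) (h' : τ ≤ ρ') :
    ρ ≤ ρ' ↔ groupOf τ ρ h ≤ groupOf τ ρ' h' := by
  constructor
  · intro hρρ' B hB
    rw [groupOf] at hB ⊢
    rw [Finset.mem_image] at hB
    obtain ⟨W, hW, rfl⟩ := hB
    obtain ⟨W', hW', hWW'⟩ := hρρ' hW
    refine ⟨_, Finset.mem_image_of_mem _ hW', fun V hV => ?_⟩
    rw [Finset.mem_filter] at hV ⊢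
    exact ⟨hV.1, hV.2.trans hWW'⟩
  · intro hG W hW
    have hB : τ.parts.filter (· ⊆ W) ∈ (groupOf τ ρ h).parts :=
      Finset.mem_image_of_mem _ hW
    obtain ⟨B', hB', hBB'⟩ := hG hB
    rw [groupOf] at hB'
    rw [Finset.mem_image] at hB'
    obtain ⟨W', hW', rfl⟩ := hB'
    refine ⟨W', hW', ?_⟩
    rw [← groupOf_sup τ ρ h hW, ← groupOf_sup τ ρ' h' hW']
    exact Finset.sup_mono hBB'

lemma muB_def {s : Finset α} (π : Finpartition s) : muB π = ∏ V ∈ π.parts, cmu V.card := rfl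

lemma filter_self_part {s : Finset α} (τ : Finpartition s) {W : Finset α} (hW : W ∈ τ.parts) :
    τ.parts.filter (· ⊆ W) = {W} := by
  ext V
  rw [Finset.mem_filter, Finset.mem_singleton]
  constructor
  · rintro ⟨hV, hVW⟩
    by_contra hne
    have hd : Disjoint V W := τ.disjoint hV hW hne
    obtain ⟨x, hx⟩ := τ.nonempty_of_mem_parts hV
    exact Finset.disjoint_left.1 hd hx (hVW hx)
  · rintro rfl
    exact ⟨hW, le_rfl⟩

lemma muRel_sum (s : Finset α) (τ σ : Finpartition s) (hτσ : τ ≤ σ) :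
    ∑ ρ ∈ (univ : Finset (Finpartition s)).filter (fun ρ => τ ≤ ρ ∧ ρ ≤ σ), muRel τ ρ
      = if τ = σ then 1 else 0 := by
  have step1 : ∑ ρ ∈ (univ : Finset (Finpartition s)).filter (fun ρ => τ ≤ ρ ∧ ρ ≤ σ), muRel τ ρ
      = ∑ G ∈ (univ : Finset (Finpartition (τ.parts : Finset (Finset α)))).filter
          (· ≤ groupOf τ σ hτσ), muB G := by
    refine Finset.sum_bij' (fun ρ hρ => groupOf τ ρ (Finset.mem_filter.1 hρ).2.1)
      (fun G _ => ungroup τ G) ?_ ?_ ?_ ?_ ?_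
    · intro ρ hρ
      obtain ⟨-, h1, h2⟩ := Finset.mem_filter.1 hρ
      rw [Finset.mem_filter]
      exact ⟨mem_univ _, (groupOf_mono h1 hτσ).1 h2⟩
    · intro G hG
      rw [Finset.mem_filter] at hG ⊢
      refine ⟨mem_univ _, le_ungroup τ G, ?_⟩
      have := ungroup_mono τ hG.2
      rwa [ungroup_groupOf] at this
    · intro ρ hρ
      exact ungroup_groupOf τ ρ _
    · intro G hG
      exact groupOf_ungroup τ G
    · intro ρ hρ
      exact muRel_eq_muB τ ρ _
  rw [step1]
  have step2 : ∑ G ∈ (univ : Finset (Finpartition (τ.parts : Finset (Finset α)))).filter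
          (· ≤ groupOf τ σ hτσ), muB G
      = ∏ B ∈ (groupOf τ σ hτσ).parts.attach, ∑ R : Finpartition B.1, muB R := by
    simp only [muB_def]
    rw [← sum_refines_eq_prod (groupOf τ σ hτσ) (fun B R => ∏ b ∈ R, cmu b.card)]
    refine Finset.sum_congr rfl fun G hG => ?_
    exact prod_parts_factor (Finset.mem_filter.1 hG).2 (fun b => cmu b.card)
  rw [step2]
  have step3 : ∀ B ∈ (groupOf τ σ hτσ).parts.attach,
      (∑ R : Finpartition B.1, muB R) = if B.1.card = 1 then 1 else 0 := by
    intro B _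
    exact muB_sum B.1 ((groupOf τ σ hτσ).nonempty_of_mem_parts B.2)
  rw [Finset.prod_congr rfl step3]
  by_cases hts : τ = σ
  · rw [if_pos hts]
    subst hts
    refine Finset.prod_eq_one fun B _ => ?_
    rw [if_pos]
    obtain ⟨W, hW, hBW⟩ := Finset.mem_image.1 B.2
    rw [← hBW, filter_self_part τ hW, Finset.card_singleton]
  · rw [if_neg hts]
    have : ¬ ∀ B ∈ (groupOf τ σ hτσ).parts, B.card = 1 := by
      intro hall
      refine hts (le_antisymm hτσ ?_)
      intro W hW
      have hB : τ.parts.filter (· ⊆ W) ∈ (groupOf τ σ hτσ).parts :=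
        Finset.mem_image_of_mem _ hW
      obtain ⟨V, hV⟩ := Finset.card_eq_one.1 (hall _ hB)
      have hsup : ({V} : Finset (Finset α)).sup id = W := by
        rw [← hV]; exact groupOf_sup τ σ hτσ hW
      rw [Finset.sup_singleton] at hsup
      have hVmem : V ∈ τ.parts := by
        have : V ∈ τ.parts.filter (· ⊆ W) := hV ▸ Finset.mem_singleton_self V
        exact (Finset.mem_filter.1 this).1
      exact ⟨V, hVmem, le_of_eq hsup.symm⟩
    push_neg at this
    obtain ⟨B, hB, hBc⟩ := this
    refine Finset.prod_eq_zero (Finset.mem_attach _ ⟨B, hB⟩) ?_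
    rw [if_neg hBc]

lemma ZM_sum (s : Finset α) (ρ σ : Finpartition s) :
    ∑ π ∈ (univ : Finset (Finpartition s)).filter (fun π => ρ ≤ π ∧ π ≤ σ), muRel π σ
      = if ρ = σ then 1 else 0 := by
  classical
  let M : Matrix (Finpartition s) (Finpartition s) ℂ :=
    fun x y => if x ≤ y then muRel x y else 0
  let Z : Matrix (Finpartition s) (Finpartition s) ℂ := fun x y => if x ≤ y then 1 else 0
  have hMZ : M * Z = 1 := by
    ext τ σ'
    rw [Matrix.mul_apply, Matrix.one_apply]
    have : ∀ ρ' : Finpartition s, M τ ρ' * Z ρ' σ'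
        = if τ ≤ ρ' ∧ ρ' ≤ σ' then muRel τ ρ' else 0 := by
      intro ρ'
      simp only [M, Z]
      by_cases h1 : τ ≤ ρ' <;> by_cases h2 : ρ' ≤ σ' <;> simp [h1, h2]
    rw [Finset.sum_congr rfl fun ρ' _ => this ρ', ← Finset.sum_filter]
    by_cases hts : τ ≤ σ'
    · exact muRel_sum s τ σ' hts
    · have : (univ : Finset (Finpartition s)).filter (fun ρ' => τ ≤ ρ' ∧ ρ' ≤ σ') = ∅ := by
        rw [Finset.filter_eq_empty_iff]
        rintro ρ' - ⟨h1, h2⟩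
        exact hts (h1.trans h2)
      rw [this, Finset.sum_empty, if_neg]
      rintro rfl
      exact hts le_rfl
  have hZM : Z * M = 1 := mul_eq_one_comm.1 hMZ
  have hkey := congrFun (congrFun hZM ρ) σ
  rw [Matrix.mul_apply, Matrix.one_apply] at hkey
  rw [← hkey, Finset.sum_filter]
  refine Finset.sum_congr rfl fun π _ => ?_
  simp only [M, Z]
  by_cases h1 : ρ ≤ π <;> by_cases h2 : π ≤ σ <;> simp [h1, h2]

lemma key2 (s : Finset α) (hs : s ≠ ⊥) (ρ : Finpartition s) :
    ∑ π ∈ (univ : Finset (Finpartition s)).filter (fun π => ρ ≤ π), cmu π.parts.card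
      = if ρ = Finpartition.indiscrete hs then 1 else 0 := by
  have h1 : ∀ π : Finpartition s, π ≤ Finpartition.indiscrete hs := by
    intro π V hV
    exact ⟨s, by simp [Finpartition.indiscrete], π.le hV⟩
  have h2 : ∀ π : Finpartition s, muRel π (Finpartition.indiscrete hs) = cmu π.parts.card := by
    intro π
    rw [muRel]
    rw [show (Finpartition.indiscrete hs).parts = {s} from rfl]
    rw [Finset.prod_singleton]
    congr 1
    have heq : π.parts.filter (· ⊆ s) = π.parts :=
      Finset.filter_true_of_mem (fun V hV => π.le hV)
    rw [heq]
  rw [← ZM_sum s ρ (Finpartition.indiscrete hs)]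
  rw [Finset.filter_congr (fun π _ => by simp [h1 π] : ∀ π ∈ (univ : Finset (Finpartition s)),
    (ρ ≤ π ↔ (ρ ≤ π ∧ π ≤ Finpartition.indiscrete hs)))]
  exact Finset.sum_congr rfl fun π _ => (h2 π).symm

/-- The blockwise cumulant-type sum of a weight `f` over a ground finset. -/
noncomputable def KfSum (f : ℕ → ℂ) {β : Type*} [DecidableEq β] (t : Finset β) : ℂ :=
  ∑ R : Finpartition t, (∏ V ∈ R.parts, f V.card) * cmu R.parts.card

lemma relation1 {s : Finset α} (f : ℕ → ℂ) (π : Finpartition s) :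
    ∑ τ ∈ (univ : Finset (Finpartition s)).filter (· ≤ π),
        (∏ V ∈ τ.parts, f V.card) * muRel τ π
      = ∏ W ∈ π.parts.attach, KfSum f W.1 := by
  have h : ∀ τ ∈ (univ : Finset (Finpartition s)).filter (· ≤ π),
      (∏ V ∈ τ.parts, f V.card) * muRel τ π
        = ∏ W ∈ π.parts.attach,
            ((∏ V ∈ τ.parts.filter (· ⊆ W.1), f V.card) * cmu (τ.parts.filter (· ⊆ W.1)).card) := by
    intro τ hτ
    rw [Finset.prod_mul_distrib]
    congr 1
    · exact prod_parts_factor (Finset.mem_filter.1 hτ).2 (fun V => f V.card)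
    · rw [muRel]
      rw [← Finset.prod_attach π.parts (fun W => cmu (τ.parts.filter (· ⊆ W)).card)]
  rw [Finset.sum_congr rfl h]
  exact sum_refines_eq_prod π (fun W R => (∏ V ∈ R, f V.card) * cmu R.card)

lemma inversion {s : Finset α} (f : ℕ → ℂ) (σ : Finpartition s) :
    ∑ π ∈ (univ : Finset (Finpartition s)).filter (· ≤ σ),
        ∏ W ∈ π.parts.attach, KfSum f W.1
      = ∏ V ∈ σ.parts, f V.card := by
  have h1 : ∀ π ∈ (univ : Finset (Finpartition s)).filter (· ≤ σ),
      (∏ W ∈ π.parts.attach, KfSum f W.1)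
        = ∑ τ : Finpartition s, (if τ ≤ π then (∏ V ∈ τ.parts, f V.card) * muRel τ π else 0) := by
    intro π _
    rw [← relation1 f π, Finset.sum_filter]
  rw [Finset.sum_congr rfl h1, Finset.sum_filter]
  have hsw : ∀ a : Finpartition s,
      (if a ≤ σ then ∑ τ : Finpartition s,
          (if τ ≤ a then (∏ V ∈ τ.parts, f V.card) * muRel τ a else 0) else 0)
        = ∑ τ : Finpartition s, (if a ≤ σ then
            (if τ ≤ a then (∏ V ∈ τ.parts, f V.card) * muRel τ a else 0) else 0) := by
    intro a
    by_cases hA : a ≤ σ <;> simp [hA]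
  rw [Finset.sum_congr rfl fun a _ => hsw a]
  rw [Finset.sum_comm]
  have h2 : ∀ τ : Finpartition s,
      (∑ π : Finpartition s, if π ≤ σ then
          (if τ ≤ π then (∏ V ∈ τ.parts, f V.card) * muRel τ π else 0) else 0)
        = (∏ V ∈ τ.parts, f V.card) * (if τ = σ then 1 else 0) := by
    intro τ
    have : ∀ π : Finpartition s, (if π ≤ σ then
          (if τ ≤ π then (∏ V ∈ τ.parts, f V.card) * muRel τ π else 0) else 0)
        = if τ ≤ π ∧ π ≤ σ then (∏ V ∈ τ.parts, f V.card) * muRel τ π else 0 := by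
      intro π
      by_cases hA : τ ≤ π <;> by_cases hB : π ≤ σ <;> simp [hA, hB]
    rw [Finset.sum_congr rfl fun π _ => this π, ← Finset.sum_filter, ← Finset.mul_sum]
    by_cases hts : τ ≤ σ
    · rw [muRel_sum s τ σ hts]
    · have he : (univ : Finset (Finpartition s)).filter (fun π => τ ≤ π ∧ π ≤ σ) = ∅ := by
        rw [Finset.filter_eq_empty_iff]
        rintro π - ⟨hA, hB⟩
        exact hts (hA.trans hB)
      rw [he, Finset.sum_empty, if_neg (fun h => hts (le_of_eq h)), mul_zero]
  rw [Finset.sum_congr rfl fun τ _ => h2 τ]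
  have hfin : ∀ τ : Finpartition s,
      (∏ V ∈ τ.parts, f V.card) * (if τ = σ then 1 else 0)
        = if τ = σ then (∏ V ∈ τ.parts, f V.card) else 0 := by
    intro τ
    by_cases hA : τ = σ <;> simp [hA]
  rw [Finset.sum_congr rfl fun τ _ => hfin τ]
  rw [Finset.sum_ite_eq' univ σ (fun τ => ∏ V ∈ τ.parts, f V.card)]
  rw [if_pos (mem_univ σ)]

section MapEmb

variable {β : Type*} {γ : Type*} [DecidableEq β] [DecidableEq γ]

/-- Push a finpartition forward along an embedding. -/
def mapEmb (ψ : β ↪ γ) {t : Finset β} (π : Finpartition t) : Finpartition (t.map ψ) where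
  parts := π.parts.image (Finset.map ψ)
  supIndep := by
    rw [Finset.supIndep_iff_pairwiseDisjoint]
    rintro x hx y hy hne
    rw [Finset.mem_coe, Finset.mem_image] at hx hy
    obtain ⟨V₁, hV₁, rfl⟩ := hx
    obtain ⟨V₂, hV₂, rfl⟩ := hy
    have : V₁ ≠ V₂ := fun h => hne (by rw [h])
    simp only [Function.onFun, id_eq]
    rw [Finset.disjoint_map]
    exact π.disjoint hV₁ hV₂ this
  sup_parts := by
    ext x
    rw [Finset.mem_sup, Finset.mem_map]
    constructor
    · rintro ⟨u, hu, hx⟩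
      rw [Finset.mem_image] at hu
      obtain ⟨V, hV, rfl⟩ := hu
      rw [id_eq, Finset.mem_map] at hx
      obtain ⟨y, hy, rfl⟩ := hx
      exact ⟨y, π.le hV hy, rfl⟩
    · rintro ⟨y, hy, rfl⟩
      rw [← π.sup_parts] at hy
      obtain ⟨V, hV, hyV⟩ := Finset.mem_sup.1 hy
      exact ⟨V.map ψ, Finset.mem_image_of_mem _ hV, by rw [id_eq, Finset.mem_map]; exact ⟨y, hyV, rfl⟩⟩
  bot_notMem := by
    rw [Finset.mem_image]
    rintro ⟨V, hV, hVb⟩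
    rw [bot_eq_empty, Finset.map_eq_empty] at hVb
    refine π.bot_notMem ?_
    rw [bot_eq_empty, ← hVb]
    exact hV

lemma mapEmb_parts (ψ : β ↪ γ) {t : Finset β} (π : Finpartition t) :
    (mapEmb ψ π).parts = π.parts.image (Finset.map ψ) := rfl

lemma mapEmb_bijective (ψ : β ↪ γ) (t : Finset β) :
    Function.Bijective (mapEmb ψ : Finpartition t → Finpartition (t.map ψ)) := by
  constructor
  · intro π₁ π₂ h
    apply Finpartition.ext
    have := congrArg Finpartition.parts h
    rw [mapEmb_parts, mapEmb_parts] at this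
    have hinj : Function.Injective (Finset.map ψ) := fun u v huv => Finset.map_injective ψ huv
    exact Finset.image_injective hinj this
  · intro π'
    have hVmap : ∀ V ∈ π'.parts, Finset.map ψ (t.filter (fun x => ψ x ∈ V)) = V := by
      intro V hV
      ext y
      rw [Finset.mem_map]
      constructor
      · rintro ⟨x, hx, rfl⟩
        exact (Finset.mem_filter.1 hx).2
      · intro hy
        have hyt : y ∈ t.map ψ := π'.le hV hy
        rw [Finset.mem_map] at hyt
        obtain ⟨x, hx, rfl⟩ := hyt
        exact ⟨x, Finset.mem_filter.2 ⟨hx, hy⟩, rfl⟩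
    refine ⟨⟨π'.parts.image (fun V => t.filter (fun x => ψ x ∈ V)), ?_, ?_, ?_⟩, ?_⟩
    · rw [Finset.supIndep_iff_pairwiseDisjoint]
      rintro x hx y hy hne
      rw [Finset.mem_coe, Finset.mem_image] at hx hy
      obtain ⟨V₁, hV₁, rfl⟩ := hx
      obtain ⟨V₂, hV₂, rfl⟩ := hy
      have hVne : V₁ ≠ V₂ := fun h => hne (by rw [h])
      have hd : Disjoint V₁ V₂ := π'.disjoint hV₁ hV₂ hVne
      simp only [Function.onFun, id_eq]
      rw [Finset.disjoint_left]
      intro x hx₁ hx₂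
      exact Finset.disjoint_left.1 hd (Finset.mem_filter.1 hx₁).2 (Finset.mem_filter.1 hx₂).2
    · apply le_antisymm
      · apply Finset.sup_le
        intro u hu
        rw [Finset.mem_image] at hu
        obtain ⟨V, hV, rfl⟩ := hu
        exact Finset.filter_subset _ _
      · intro x hx
        have : ψ x ∈ t.map ψ := by rw [Finset.mem_map]; exact ⟨x, hx, rfl⟩
        rw [← π'.sup_parts] at this
        obtain ⟨V, hV, hxV⟩ := Finset.mem_sup.1 this
        exact Finset.mem_sup.2 ⟨_, Finset.mem_image_of_mem _ hV,
          Finset.mem_filter.2 ⟨hx, hxV⟩⟩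
    · rw [bot_eq_empty, Finset.mem_image]
      rintro ⟨V, hV, hVb⟩
      obtain ⟨y, hy⟩ := π'.nonempty_of_mem_parts hV
      have hyt : y ∈ t.map ψ := π'.le hV hy
      rw [Finset.mem_map] at hyt
      obtain ⟨x, hx, rfl⟩ := hyt
      have : x ∈ t.filter (fun x => ψ x ∈ V) := Finset.mem_filter.2 ⟨hx, hy⟩
      rw [hVb] at this
      exact absurd this (Finset.notMem_empty x)
    · apply Finpartition.ext
      rw [mapEmb_parts]
      show Finset.image _ (Finset.image _ π'.parts) = π'.parts
      rw [Finset.image_image]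
      have himg : ∀ V ∈ π'.parts,
          (Finset.map ψ ∘ fun V => t.filter (fun x => ψ x ∈ V)) V = id V := fun V hV => hVmap V hV
      rw [Finset.image_congr himg, Finset.image_id]

lemma KfSum_map (f : ℕ → ℂ) (ψ : β ↪ γ) (t : Finset β) :
    KfSum f (t.map ψ) = KfSum f t := by
  rw [KfSum, KfSum]
  rw [← Fintype.sum_bijective (mapEmb ψ) (mapEmb_bijective ψ t) _ _ ?_]
  intro π
  congr 1
  · rw [mapEmb_parts, Finset.prod_image ?_]
    · exact Finset.prod_congr rfl fun V _ => by rw [Finset.card_map]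
    · intro u hu v hv huv
      exact Finset.map_injective ψ huv
  · rw [mapEmb_parts, Finset.card_image_of_injOn (fun u hu v hv huv => Finset.map_injective ψ huv)]

lemma KfSum_eq_fin (f : ℕ → ℂ) (v : Finset β) :
    KfSum f v = KfSum f (Finset.univ : Finset (Fin v.card)) := by
  classical
  let e : Fin v.card ↪ β := (v.equivFin.symm.toEmbedding).trans (Function.Embedding.subtype _)
  have hmap : (Finset.univ : Finset (Fin v.card)).map e = v := by
    ext x
    simp only [Finset.mem_map, Finset.mem_univ, true_and]
    constructor
    · rintro ⟨i, rfl⟩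
      exact (v.equivFin.symm i).2
    · intro hx
      refine ⟨v.equivFin ⟨x, hx⟩, ?_⟩
      simp [e]
  conv_lhs => rw [← hmap]
  rw [KfSum_map]

lemma KfSum_card_congr (f : ℕ → ℂ) (t : Finset β) (u : Finset γ) (h : t.card = u.card) :
    KfSum f t = KfSum f u := by
  rw [KfSum_eq_fin f t, KfSum_eq_fin f u, h]

end MapEmb

section SetoidBridge

variable {α : Type*} [Fintype α] [DecidableEq α]

lemma toSetoidUniv_r {P : Finpartition (Finset.univ : Finset α)} {a b : α} :
    P.toSetoidUniv a b ↔ ∃ V ∈ P.parts, a ∈ V ∧ b ∈ V := Iff.rfl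

lemma le_iff_toSetoidUniv {σ π : Finpartition (Finset.univ : Finset α)} :
    σ ≤ π ↔ σ.toSetoidUniv ≤ π.toSetoidUniv := by
  constructor
  · intro h
    rw [Setoid.le_def]
    rintro a b ⟨V, hV, haV, hbV⟩
    obtain ⟨W, hW, hVW⟩ := h hV
    exact ⟨W, hW, hVW haV, hVW hbV⟩
  · intro h V hV
    obtain ⟨a, ha⟩ := σ.nonempty_of_mem_parts hV
    obtain ⟨W, hW, haW⟩ := π.exists_mem (Finset.mem_univ a)
    refine ⟨W, hW, fun b hb => ?_⟩
    have : σ.toSetoidUniv a b := ⟨V, hV, ha, hb⟩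
    obtain ⟨W', hW', haW', hbW'⟩ := h this
    rwa [π.eq_of_mem_parts hW' hW haW' haW] at hbW'

lemma toSetoidUniv_injective :
    Function.Injective (Finpartition.toSetoidUniv : Finpartition (Finset.univ : Finset α) → _) := by
  intro σ π h
  exact le_antisymm (le_iff_toSetoidUniv.2 (le_of_eq h)) (le_iff_toSetoidUniv.2 (ge_of_eq h))

lemma toSetoidUniv_ofSetoid (S : Setoid α) [DecidableRel S.r] :
    (Finpartition.ofSetoid S).toSetoidUniv = S := by
  apply Setoid.ext
  intro a b
  rw [toSetoidUniv_r]
  constructor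
  · rintro ⟨V, hV, haV, hbV⟩
    have ha : V = (Finpartition.ofSetoid S).part a :=
      ((Finpartition.ofSetoid S).part_eq_of_mem hV haV).symm
    rw [ha] at hbV
    exact Finpartition.mem_part_ofSetoid_iff_rel.1 hbV
  · intro hab
    refine ⟨(Finpartition.ofSetoid S).part a,
      (Finpartition.ofSetoid S).part_mem.2 (Finset.mem_univ a),
      (Finpartition.ofSetoid S).mem_part (Finset.mem_univ a), ?_⟩
    exact Finpartition.mem_part_ofSetoid_iff_rel.2 hab

lemma toSetoidUniv_indiscrete (h : (Finset.univ : Finset α) ≠ ⊥) :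
    (Finpartition.indiscrete h).toSetoidUniv = ⊤ := by
  apply Setoid.ext
  intro a b
  rw [toSetoidUniv_r]
  simp only [Finpartition.indiscrete_parts, Finset.mem_singleton]
  constructor
  · intro _
    trivial
  · intro _
    exact ⟨Finset.univ, rfl, Finset.mem_univ a, Finset.mem_univ b⟩

open scoped Classical in
lemma key2_setoid (h : (Finset.univ : Finset α) ≠ ⊥) {m : ℕ}
    (σ : Fin m → Finpartition (Finset.univ : Finset α)) :
    ∑ π ∈ (Finset.univ : Finset (Finpartition (Finset.univ : Finset α))).filter
        (fun π => ∀ i, σ i ≤ π), cmu π.parts.card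
      = if (⨆ i, (σ i).toSetoidUniv) = (⊤ : Setoid α) then 1 else 0 := by
  classical
  set S := ⨆ i, (σ i).toSetoidUniv with hS
  set ρ := Finpartition.ofSetoid S with hρ
  have hρS : ρ.toSetoidUniv = S := toSetoidUniv_ofSetoid S
  have hiff : ∀ π : Finpartition (Finset.univ : Finset α), (∀ i, σ i ≤ π) ↔ ρ ≤ π := by
    intro π
    rw [le_iff_toSetoidUniv, hρS, hS, iSup_le_iff]
    constructor
    · intro hall i
      exact le_iff_toSetoidUniv.1 (hall i)
    · intro hall i
      exact le_iff_toSetoidUniv.2 (hall i)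
  rw [Finset.filter_congr (fun π _ => by rw [hiff π])]
  rw [key2 _ h ρ]
  congr 1
  rw [eq_iff_iff]
  constructor
  · intro hρi
    rw [← hρS, hρi, toSetoidUniv_indiscrete h]
  · intro hStop
    apply toSetoidUniv_injective
    rw [hρS, toSetoidUniv_indiscrete h, hStop]

end SetoidBridge

end Combinatorics


section PerBlock

open scoped Classical

lemma ffcumulant_KfSum (d k : ℕ) (q : Polynomial ℂ) :
    ffcumulant d k q = (-(d : ℂ)) ^ (k - 1) / (Nat.factorial (k - 1) : ℂ) *
      KfSum (fun j => atilde d q j) (Finset.univ : Finset (Fin k)) := rfl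

lemma KfSum_block (d n : ℕ) (hd : 1 ≤ d) (q : Polynomial ℂ) (W : Finset (Fin n)) :
    KfSum (fun j => atilde d q j) W
      = ((Nat.factorial (W.card - 1) : ℂ) / (-(d : ℂ)) ^ (W.card - 1)) *
          ffcumulant d W.card q := by
  have hdne : (-(d : ℂ)) ^ (W.card - 1) ≠ 0 := by
    apply pow_ne_zero
    simp only [ne_eq, neg_eq_zero, Nat.cast_eq_zero]
    omega
  have hfne : ((Nat.factorial (W.card - 1) : ℂ)) ≠ 0 :=
    Nat.cast_ne_zero.mpr (Nat.factorial_ne_zero _)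
  rw [ffcumulant_KfSum]
  have : KfSum (fun j => atilde d q j) W
      = KfSum (fun j => atilde d q j) (Finset.univ : Finset (Fin W.card)) := by
    apply KfSum_card_congr
    simp
  rw [this]
  field_simp

lemma prod_block_factor (d n : ℕ) (hd : 1 ≤ d) (τ : Finpartition (univ : Finset (Fin n))) :
    ∏ W ∈ τ.parts, ((Nat.factorial (W.card - 1) : ℂ) / (-(d : ℂ)) ^ (W.card - 1))
      = (d : ℂ) ^ ((τ.parts.card : ℤ) - (n : ℤ)) * ∏ W ∈ τ.parts, cmu W.card := by
  have hdne : (d : ℂ) ≠ 0 := Nat.cast_ne_zero.mpr (by omega)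
  set k := τ.parts.card with hk
  have hkn : k ≤ n := by
    have := τ.card_parts_le_card
    simpa using this
  have hsum : ∑ W ∈ τ.parts, (W.card - 1) = n - k := by
    have h1 : ∑ W ∈ τ.parts, W.card = n := by
      have := τ.sum_card_parts
      simpa using this
    have h2 : ∑ W ∈ τ.parts, (W.card - 1) + ∑ W ∈ τ.parts, 1
        = ∑ W ∈ τ.parts, W.card := by
      rw [← Finset.sum_add_distrib]
      refine Finset.sum_congr rfl fun W hW => ?_
      have : 1 ≤ W.card := Finset.card_pos.mpr (τ.nonempty_of_mem_parts hW)
      omega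
    rw [Finset.sum_const, smul_eq_mul, mul_one] at h2
    omega
  set S := ∑ W ∈ τ.parts, (W.card - 1) with hS
  have hL : ∏ W ∈ τ.parts, ((Nat.factorial (W.card - 1) : ℂ) / (-(d : ℂ)) ^ (W.card - 1))
      = (∏ W ∈ τ.parts, (Nat.factorial (W.card - 1) : ℂ)) / (-(d : ℂ)) ^ S := by
    rw [Finset.prod_div_distrib, Finset.prod_pow_eq_pow_sum]
  have hR : ∏ W ∈ τ.parts, cmu W.card
      = (-1 : ℂ) ^ S * ∏ W ∈ τ.parts, (Nat.factorial (W.card - 1) : ℂ) := by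
    simp only [cmu]
    rw [Finset.prod_mul_distrib, Finset.prod_pow_eq_pow_sum]
  rw [hL, hR]
  have hz : (d : ℂ) ^ ((k : ℤ) - (n : ℤ)) = ((d : ℂ) ^ S)⁻¹ := by
    have : (k : ℤ) - (n : ℤ) = -(S : ℤ) := by
      have h3 := hsum
      omega
    rw [this, zpow_neg, zpow_natCast]
  rw [hz]
  have hnp : (-(d : ℂ)) ^ S = (-1 : ℂ) ^ S * (d : ℂ) ^ S := by
    rw [neg_pow]
  rw [hnp]
  have h1 : ((-1 : ℂ) ^ S) * ((-1 : ℂ) ^ S) = 1 := by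
    rw [← mul_pow]
    simp
  field_simp
  ring_nf
  rw [mul_comm S 2, pow_mul]
  simp

lemma perI (d n : ℕ) (hd : 1 ≤ d) (hnd : n ≤ d) (q : Polynomial ℂ)
    (τ : Finpartition (univ : Finset (Fin n))) :
    (∏ W ∈ τ.parts.attach, KfSum (fun j => atilde d q j) W.1)
      = (d : ℂ) ^ ((τ.parts.card : ℤ) - (n : ℤ)) *
          (∏ V ∈ τ.parts, ((-1) ^ (V.card - 1) * (Nat.factorial (V.card - 1) : ℂ))) *
          ∏ V ∈ τ.parts, ffcumulant d V.card q := by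
  have h1 : ∀ W ∈ τ.parts.attach, KfSum (fun j => atilde d q j) W.1
      = ((Nat.factorial (W.1.card - 1) : ℂ) / (-(d : ℂ)) ^ (W.1.card - 1)) *
          ffcumulant d W.1.card q := fun W _ => KfSum_block d n hd q W.1
  rw [Finset.prod_congr rfl h1, Finset.prod_mul_distrib]
  rw [Finset.prod_attach τ.parts
    (fun W => ((Nat.factorial (W.card - 1) : ℂ) / (-(d : ℂ)) ^ (W.card - 1)))]
  rw [Finset.prod_attach τ.parts (fun W => ffcumulant d W.card q)]
  rw [prod_block_factor d n hd τ]
  have : ∏ W ∈ τ.parts, cmu W.card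
      = ∏ V ∈ τ.parts, ((-1 : ℂ) ^ (V.card - 1) * (Nat.factorial (V.card - 1) : ℂ)) := rfl
  rw [this]

end PerBlock

open scoped Classical in
theorem statement8 (d : ℕ) (hd : 1 ≤ d) (m : ℕ) (hm : 1 ≤ m) (p : Fin m → Polynomial ℂ)
    (hmonic : ∀ i, (p i).Monic) (hdeg : ∀ i, (p i).natDegree = d)
    (n : ℕ) (hn : 1 ≤ n) (hnd : n ≤ d) :
    ffcumulant d n (ffconv d m p) =
      (-(d : ℂ)) ^ (n - 1) / (Nat.factorial (n - 1) : ℂ) *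
        ∑ σ : Fin m → Finpartition (Finset.univ : Finset (Fin n)),
          if (⨆ i, (σ i).toSetoidUniv) = (⊤ : Setoid (Fin n)) then
            ∏ i, ((d : ℂ) ^ (((σ i).parts.card : ℤ) - (n : ℤ)) *
              (∏ V ∈ (σ i).parts,
                ((-1) ^ (V.card - 1) * (Nat.factorial (V.card - 1) : ℂ))) *
              ∏ V ∈ (σ i).parts, ffcumulant d V.card (p i))
          else 0 := by
  have hno : (Finset.univ : Finset (Fin n)) ≠ ⊥ := by
    simp only [bot_eq_empty, ← Finset.nonempty_iff_ne_empty]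
    exact ⟨⟨0, hn⟩, Finset.mem_univ _⟩
  rw [ffcumulant]
  congr 1
  -- Step A+B+C : rewrite each summand of the left sum
  have stepA : ∀ π : Finpartition (Finset.univ : Finset (Fin n)),
      (∏ V ∈ π.parts, atilde d (ffconv d m p) V.card) *
          ((-1) ^ (π.parts.card - 1) * (Nat.factorial (π.parts.card - 1) : ℂ))
        = (∑ x ∈ (Finset.univ : Finset (Fin m → Finpartition (Finset.univ : Finset (Fin n)))),
            if (∀ i, x i ≤ π) then
              ∏ i, ∏ W ∈ (x i).parts.attach, KfSum (fun j => atilde d (p i) j) W.1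
            else 0) * cmu π.parts.card := by
    intro π
    have h1 : ∏ V ∈ π.parts, atilde d (ffconv d m p) V.card
        = ∏ i, ∏ V ∈ π.parts, atilde d (p i) V.card := by
      rw [← Finset.prod_comm]
      refine Finset.prod_congr rfl fun V hV => ?_
      apply atilde_ffconv
      calc V.card ≤ (Finset.univ : Finset (Fin n)).card := Finset.card_le_card (π.le hV)
        _ = n := by simp
        _ ≤ d := hnd
    have h2 : ∀ i : Fin m, ∏ V ∈ π.parts, atilde d (p i) V.card
        = ∑ τ ∈ (Finset.univ : Finset (Finpartition (Finset.univ : Finset (Fin n)))).filter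
            (· ≤ π), ∏ W ∈ τ.parts.attach, KfSum (fun j => atilde d (p i) j) W.1 := by
      intro i
      exact (inversion (fun j => atilde d (p i) j) π).symm
    have h3 : ∏ i, ∏ V ∈ π.parts, atilde d (p i) V.card
        = ∑ x ∈ Fintype.piFinset (fun _ : Fin m =>
            (Finset.univ : Finset (Finpartition (Finset.univ : Finset (Fin n)))).filter (· ≤ π)),
            ∏ i, ∏ W ∈ (x i).parts.attach, KfSum (fun j => atilde d (p i) j) W.1 := by
      rw [Finset.prod_congr rfl fun i _ => h2 i]
      rw [Finset.prod_univ_sum]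
    have h4 : Fintype.piFinset (fun _ : Fin m =>
          (Finset.univ : Finset (Finpartition (Finset.univ : Finset (Fin n)))).filter (· ≤ π))
        = (Finset.univ : Finset (Fin m → Finpartition (Finset.univ : Finset (Fin n)))).filter
            (fun x => ∀ i, x i ≤ π) := by
      ext x
      simp [Fintype.mem_piFinset]
    rw [h1, h3, h4, Finset.sum_filter]
    rfl
  rw [Finset.sum_congr rfl fun π _ => stepA π]
  -- distribute and swap the sums
  rw [Finset.sum_congr rfl fun π (_ : π ∈ Finset.univ) => Finset.sum_mul _ _ (cmu π.parts.card)]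
  rw [Finset.sum_comm]
  refine Finset.sum_congr rfl fun x _ => ?_
  -- inner sum over π
  have h5 : ∀ π : Finpartition (Finset.univ : Finset (Fin n)),
      (if (∀ i, x i ≤ π) then
          ∏ i, ∏ W ∈ (x i).parts.attach, KfSum (fun j => atilde d (p i) j) W.1
        else 0) * cmu π.parts.card
        = if (∀ i, x i ≤ π) then
            (∏ i, ∏ W ∈ (x i).parts.attach, KfSum (fun j => atilde d (p i) j) W.1)
              * cmu π.parts.card
          else 0 := by
    intro π
    by_cases hc : ∀ i, x i ≤ π <;> simp [hc]
  rw [Finset.sum_congr rfl fun π _ => h5 π, ← Finset.sum_filter, ← Finset.mul_sum]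
  rw [key2_setoid hno x]
  by_cases hc : (⨆ i, (x i).toSetoidUniv) = (⊤ : Setoid (Fin n))
  · rw [if_pos hc, if_pos hc, mul_one]
    exact Finset.prod_congr rfl fun i _ => perI d n hd hnd (p i) (x i)
  · rw [if_neg hc, if_neg hc, mul_zero]
end

section
/- Let f = 1 + Σ_{k≥1} (a_k/k!)·X^k be a formal power series over ℂ with constant term 1, where a_k ∈ ℂ. Then for every l ≥ 0 there exists a polynomial q_l ∈ ℂ[y] with deg q_l ≤ l and with coefficient of y^l equal to a_1^l/l!, such that for every natural number m, the coefficient of X^l in the power series f^m equals q_l(m). -/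
open Finset Filter

theorem statement13 (a : ℕ → ℂ) (f : PowerSeries ℂ)
    (h0 : PowerSeries.coeff 0 f = 1)
    (hf : ∀ k, 1 ≤ k → PowerSeries.coeff k f = a k / (Nat.factorial k : ℂ)) :
    ∀ l : ℕ, ∃ q : Polynomial ℂ, q.natDegree ≤ l ∧
      q.coeff l = a 1 ^ l / (Nat.factorial l : ℂ) ∧
      ∀ m : ℕ, PowerSeries.coeff l (f ^ m) = q.eval (m : ℂ) := by
  intro l
  set g : PowerSeries ℂ := f - 1 with hg
  have hfg : f = g + 1 := by rw [hg]; ring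
  have hg0 : PowerSeries.constantCoeff g = 0 := by
    simp [hg, ← PowerSeries.coeff_zero_eq_constantCoeff, h0]
  obtain ⟨h, hh⟩ : (PowerSeries.X : PowerSeries ℂ) ∣ g := PowerSeries.X_dvd_iff.mpr hg0
  have hg1 : PowerSeries.coeff 1 g = a 1 := by
    have := hf 1 le_rfl
    simp [hg, this]
  -- coefficients of powers of g
  set c : ℕ → ℂ := fun j => PowerSeries.coeff l (g ^ j) with hc
  have hczero : ∀ j, l < j → c j = 0 := by
    intro j hj
    have : (PowerSeries.X : PowerSeries ℂ) ^ j ∣ g ^ j := pow_dvd_pow_of_dvd ⟨h, hh⟩ j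
    exact PowerSeries.X_pow_dvd_iff.mp this l hj
  have hcl : c l = a 1 ^ l := by
    have : g ^ l = PowerSeries.X ^ l * h ^ l := by rw [hh, mul_pow]
    rw [hc]
    simp only [this]
    have h1 : PowerSeries.coeff l (PowerSeries.X ^ l * h ^ l) =
        PowerSeries.coeff 0 (h ^ l) := by
      simpa using PowerSeries.coeff_X_pow_mul (h ^ l) l 0
    rw [h1, PowerSeries.coeff_zero_eq_constantCoeff, map_pow]
    congr 1
    have : PowerSeries.coeff 1 g = PowerSeries.constantCoeff h := by
      rw [hh]
      simpa using PowerSeries.coeff_X_pow_mul h 1 0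
    rw [← this, hg1]
  refine ⟨∑ j ∈ Finset.range (l + 1),
      Polynomial.C (c j / (Nat.factorial j : ℂ)) * descPochhammer ℂ j, ?_, ?_, ?_⟩
  · apply Polynomial.natDegree_sum_le_of_forall_le
    intro j hj
    calc (Polynomial.C (c j / (Nat.factorial j : ℂ)) * descPochhammer ℂ j).natDegree
        ≤ (descPochhammer ℂ j).natDegree := Polynomial.natDegree_C_mul_le _ _
      _ = j := descPochhammer_natDegree ℂ j
      _ ≤ l := Nat.lt_succ_iff.mp (Finset.mem_range.mp hj)
  · rw [Polynomial.finset_sum_coeff]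
    rw [Finset.sum_eq_single l]
    · rw [Polynomial.coeff_C_mul]
      have : (descPochhammer ℂ l).coeff l = 1 := by
        have hm := monic_descPochhammer ℂ l
        have := hm.leadingCoeff
        rwa [Polynomial.leadingCoeff, descPochhammer_natDegree] at this
      rw [this, mul_one, hcl]
    · intro j hj hjl
      rw [Polynomial.coeff_C_mul]
      have : (descPochhammer ℂ j).coeff l = 0 := by
        apply Polynomial.coeff_eq_zero_of_natDegree_lt
        rw [descPochhammer_natDegree]
        exact lt_of_le_of_ne (Nat.lt_succ_iff.mp (Finset.mem_range.mp hj)) hjl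
      rw [this, mul_zero]
    · intro hl
      exact absurd (Finset.self_mem_range_succ l) hl
  · intro m
    have hpow : f ^ m = ∑ k ∈ Finset.range (m + 1),
        g ^ k * (Nat.choose m k : PowerSeries ℂ) := by
      rw [hfg, add_pow]
      simp
    have hlhs : PowerSeries.coeff l (f ^ m) =
        ∑ k ∈ Finset.range (m + 1), c k * (Nat.choose m k : ℂ) := by
      rw [hpow, map_sum]
      refine Finset.sum_congr rfl fun k _ => ?_
      rw [← PowerSeries.coeff_mul_C]
      congr 1
    have hrhs : (∑ j ∈ Finset.range (l + 1),
        Polynomial.C (c j / (Nat.factorial j : ℂ)) * descPochhammer ℂ j).eval (m : ℂ) =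
        ∑ j ∈ Finset.range (l + 1), c j * (Nat.choose m j : ℂ) := by
      rw [Polynomial.eval_finset_sum]
      refine Finset.sum_congr rfl fun j _ => ?_
      rw [Polynomial.eval_mul, Polynomial.eval_C, descPochhammer_eval_eq_descFactorial,
        Nat.descFactorial_eq_factorial_mul_choose]
      have hj0 : (Nat.factorial j : ℂ) ≠ 0 := Nat.cast_ne_zero.mpr (Nat.factorial_ne_zero j)
      push_cast
      field_simp
    rw [hlhs, hrhs]
    -- both sums equal sum over range (m + l + 1)
    have e1 : ∑ k ∈ Finset.range (m + 1), c k * (Nat.choose m k : ℂ) =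
        ∑ k ∈ Finset.range (m + l + 1), c k * (Nat.choose m k : ℂ) := by
      apply Finset.sum_subset
      · exact Finset.range_subset_range.mpr (by omega)
      · intro k _ hk
        have : m < k := by
          simp only [Finset.mem_range, not_lt] at hk
          omega
        rw [Nat.choose_eq_zero_of_lt this]
        simp
    have e2 : ∑ k ∈ Finset.range (l + 1), c k * (Nat.choose m k : ℂ) =
        ∑ k ∈ Finset.range (m + l + 1), c k * (Nat.choose m k : ℂ) := by
      apply Finset.sum_subset
      · exact Finset.range_subset_range.mpr (by omega)
      · intro k _ hk
        have : l < k := by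
          simp only [Finset.mem_range, not_lt] at hk
          omega
        rw [hczero k this, zero_mul]
    rw [e1, e2]
end
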